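/- arXiv:2204.11456 — 4 statements merged into one kernel-verified Lean document; each statement's English description precedes it below -/
import Mathlib

section
/- Let Ω ⊂ ℝ^d be a measurable set of finite measure and p ∈ (0,1). If (u_k) is a sequence in L¹(Ω) with u_k → u in L¹(Ω) and (ε_k) is a sequence of nonnegative reals with ε_k → ε ≥ 0, then ∫_Ω ψ_{ε_k}(u_k(x)²) dx → ∫_Ω ψ_ε(u(x)²) dx, where ψ_0(t) := t^(p/2). -/
open Set MeasureTheory Filter Topology

noncomputable def psiSm (p ε t : ℝ) : ℝ :=
  if t < ε ^ 2 then (p / 2) * t / ε ^ (2 - p) + (1 - p / 2) * ε ^ p else t ^ (p / 2)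

namespace PsiAux

/-- real subadditivity of rpow for exponents ≤ 1 -/
lemma rpow_add_le {p x y : ℝ} (hx : 0 ≤ x) (hy : 0 ≤ y) (hp0 : 0 ≤ p) (hp1 : p ≤ 1) :
    (x + y) ^ p ≤ x ^ p + y ^ p := by
  have h := NNReal.rpow_add_le_add_rpow ⟨x, hx⟩ ⟨y, hy⟩ hp0 hp1
  have h2 := NNReal.coe_le_coe.2 h
  push_cast [NNReal.coe_rpow] at h2
  exact h2

lemma sq_rpow {p x : ℝ} (hx : 0 ≤ x) : (x ^ 2) ^ (p / 2) = x ^ p := by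
  rw [← Real.rpow_natCast x 2, ← Real.rpow_mul hx,
    show ((2:ℕ):ℝ) * (p / 2) = p by push_cast; ring]

/-- tangent line inequality -/
lemma rpow_le_lin {p ε t : ℝ} (hp : 0 < p) (hp1 : p < 1) (hε : 0 < ε) (ht : 0 ≤ t) :
    t ^ (p / 2) ≤ p / 2 * t / ε ^ (2 - p) + (1 - p / 2) * ε ^ p := by
  have hε2 : (0:ℝ) < ε ^ 2 := by positivity
  have hεp : (0:ℝ) < ε ^ p := Real.rpow_pos_of_pos hε p
  have hε2p : (0:ℝ) < ε ^ (2 - p) := Real.rpow_pos_of_pos hε _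
  have ha : 0 ≤ t / ε ^ 2 := by positivity
  have key := Real.geom_mean_le_arith_mean2_weighted (by positivity : (0:ℝ) ≤ p / 2)
      (by linarith : (0:ℝ) ≤ 1 - p / 2) ha zero_le_one (by ring)
  rw [Real.one_rpow, mul_one, mul_one] at key
  have hmul := mul_le_mul_of_nonneg_right key hεp.le
  have hsplit : ε ^ (2 - p) * ε ^ p = ε ^ 2 := by
    rw [← Real.rpow_add hε]
    rw [show (2:ℝ) - p + p = ((2:ℕ):ℝ) by push_cast; ring, Real.rpow_natCast]
  have hL : (t / ε ^ 2) ^ (p / 2) * ε ^ p = t ^ (p / 2) := by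
    rw [Real.div_rpow ht hε2.le, sq_rpow hε.le]
    field_simp
  rw [hL] at hmul
  refine hmul.trans (le_of_eq ?_)
  have hrw : ε ^ (2 - p) = ε ^ 2 / ε ^ p := by
    rw [eq_div_iff hεp.ne', hsplit]
  rw [add_mul, hrw]
  field_simp

variable {p ε t : ℝ}

lemma lin_le_eps (hp : 0 < p) (hε : 0 < ε) (ht0 : 0 ≤ t) (ht : t ≤ ε ^ 2) :
    p / 2 * t / ε ^ (2 - p) + (1 - p / 2) * ε ^ p ≤ ε ^ p := by
  have hε2p : (0:ℝ) < ε ^ (2 - p) := Real.rpow_pos_of_pos hε _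
  have hsplit : ε ^ (2 - p) * ε ^ p = ε ^ 2 := by
    rw [← Real.rpow_add hε]
    rw [show (2:ℝ) - p + p = ((2:ℕ):ℝ) by push_cast; ring, Real.rpow_natCast]
  have h1 : p / 2 * t / ε ^ (2 - p) ≤ p / 2 * ε ^ p := by
    rw [div_le_iff₀ hε2p]
    calc p / 2 * t ≤ p / 2 * ε ^ 2 := by nlinarith
    _ = p / 2 * ε ^ p * ε ^ (2 - p) := by rw [mul_assoc, mul_comm (ε ^ p), hsplit]
  linarith

lemma eps_sq_rpow (hε : 0 ≤ ε) : (ε ^ 2) ^ (p / 2) = ε ^ p := sq_rpow hε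

lemma psi_ge (hp : 0 < p) (hp1 : p < 1) (hε : 0 ≤ ε) (ht : 0 ≤ t) :
    t ^ (p / 2) ≤ psiSm p ε t := by
  unfold psiSm
  split_ifs with h
  · have hεpos : 0 < ε := by
      rcases hε.lt_or_eq with h'|h'
      · exact h'
      · exfalso; rw [← h'] at h; simp at h; linarith
    exact rpow_le_lin hp hp1 hεpos ht
  · exact le_refl _

lemma psi_nonneg (hp : 0 < p) (hp1 : p < 1) (hε : 0 ≤ ε) (ht : 0 ≤ t) :
    0 ≤ psiSm p ε t :=
  le_trans (Real.rpow_nonneg ht _) (psi_ge hp hp1 hε ht)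

lemma psi_le (hp : 0 < p) (hp1 : p < 1) (hε : 0 ≤ ε) (ht : 0 ≤ t) :
    psiSm p ε t ≤ ε ^ p + t ^ (p / 2) := by
  unfold psiSm
  split_ifs with h
  · have hεpos : 0 < ε := by
      rcases hε.lt_or_eq with h'|h'
      · exact h'
      · exfalso; rw [← h'] at h; simp at h; linarith
    have := lin_le_eps hp hεpos ht h.le
    have h2 : 0 ≤ t ^ (p / 2) := Real.rpow_nonneg ht _
    linarith
  · have h2 : 0 ≤ ε ^ p := Real.rpow_nonneg hε _
    linarith

lemma psi_sub_abs (hp : 0 < p) (hp1 : p < 1) (hε : 0 ≤ ε) (ht : 0 ≤ t) :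
    |psiSm p ε t - t ^ (p / 2)| ≤ ε ^ p := by
  rw [abs_le]
  constructor
  · have := psi_ge hp hp1 hε ht
    have h2 : 0 ≤ ε ^ p := Real.rpow_nonneg hε _
    linarith
  · have := psi_le hp hp1 hε ht
    linarith

lemma psi_mono (hp : 0 < p) (hp1 : p < 1) (hε : 0 ≤ ε) {t₁ t₂ : ℝ} (ht₁ : 0 ≤ t₁)
    (h12 : t₁ ≤ t₂) : psiSm p ε t₁ ≤ psiSm p ε t₂ := by
  unfold psiSm
  split_ifs with h1 h2 h2
  · have hεpos : 0 < ε := by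
      rcases hε.lt_or_eq with h'|h'
      · exact h'
      · exfalso; rw [← h'] at h1; simp at h1; linarith
    have hε2p : (0:ℝ) < ε ^ (2 - p) := Real.rpow_pos_of_pos hεpos _
    have hnum : p / 2 * t₁ ≤ p / 2 * t₂ := by nlinarith
    have : p / 2 * t₁ / ε ^ (2 - p) ≤ p / 2 * t₂ / ε ^ (2 - p) := by gcongr
    linarith
  · -- t₁ < ε², ε² ≤ t₂
    have hεpos : 0 < ε := by
      rcases hε.lt_or_eq with h'|h'
      · exact h'
      · exfalso; rw [← h'] at h1; simp at h1; linarith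
    calc p / 2 * t₁ / ε ^ (2 - p) + (1 - p / 2) * ε ^ p ≤ ε ^ p :=
          lin_le_eps hp hεpos ht₁ h1.le
      _ = (ε ^ 2) ^ (p / 2) := (eps_sq_rpow hε).symm
      _ ≤ t₂ ^ (p / 2) := Real.rpow_le_rpow (by positivity) (not_lt.1 h2) (by positivity)
  · exact absurd (lt_of_le_of_lt h12 h2) h1
  · exact Real.rpow_le_rpow ht₁ h12 (by positivity)

lemma psi_eq_maxmin (hp : 0 < p) (hp1 : p < 1) (hε : 0 < ε) (ht : 0 ≤ t) :
    psiSm p ε t =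
      max (t ^ (p / 2)) (min (p / 2 * t / ε ^ (2 - p) + (1 - p / 2) * ε ^ p) (ε ^ p)) := by
  have hε2p : (0:ℝ) < ε ^ (2 - p) := Real.rpow_pos_of_pos hε _
  have hsplit : ε ^ (2 - p) * ε ^ p = ε ^ 2 := by
    rw [← Real.rpow_add hε]
    rw [show (2:ℝ) - p + p = ((2:ℕ):ℝ) by push_cast; ring, Real.rpow_natCast]
  unfold psiSm
  split_ifs with h
  · rw [min_eq_left (lin_le_eps hp hε ht h.le), max_eq_right (rpow_le_lin hp hp1 hε ht)]
  · push_neg at h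
    have hmin : min (p / 2 * t / ε ^ (2 - p) + (1 - p / 2) * ε ^ p) (ε ^ p) = ε ^ p := by
      apply min_eq_right
      have h1 : p / 2 * ε ^ p ≤ p / 2 * t / ε ^ (2 - p) := by
        rw [le_div_iff₀ hε2p]
        calc p / 2 * ε ^ p * ε ^ (2 - p) = p / 2 * ε ^ 2 := by
              rw [mul_assoc, mul_comm (ε ^ p), hsplit]
          _ ≤ p / 2 * t := by nlinarith
      linarith
    rw [hmin]
    refine (max_eq_left ?_).symm
    calc ε ^ p = (ε ^ 2) ^ (p / 2) := (eps_sq_rpow hε.le).symm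
      _ ≤ t ^ (p / 2) := Real.rpow_le_rpow (by positivity) h (by positivity)

/-- key estimate on nonnegative reals -/
lemma psi_sq_diff_aux (hp : 0 < p) (hp1 : p < 1) (hε : 0 ≤ ε) {a b : ℝ}
    (hb : 0 ≤ b) (hab : b ≤ a) :
    psiSm p ε (a ^ 2) - psiSm p ε (b ^ 2) ≤ (a - b) ^ p := by
  have ha : 0 ≤ a := hb.trans hab
  set c := a - b with hc
  have hc0 : 0 ≤ c := by simp [hc]; linarith
  clear_value c
  rcases lt_or_ge a ε with hlt | hge
  · -- both in linear branch
    have hεpos : 0 < ε := lt_of_le_of_lt ha hlt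
    have hε2p : (0:ℝ) < ε ^ (2 - p) := Real.rpow_pos_of_pos hεpos _
    have hblt : b < ε := lt_of_le_of_lt hab hlt
    have hsq_a : a ^ 2 < ε ^ 2 := by nlinarith
    have hsq_b : b ^ 2 < ε ^ 2 := by nlinarith
    rw [psiSm, psiSm, if_pos hsq_a, if_pos hsq_b]
    have hdiff : p / 2 * a ^ 2 / ε ^ (2 - p) + (1 - p / 2) * ε ^ p -
        (p / 2 * b ^ 2 / ε ^ (2 - p) + (1 - p / 2) * ε ^ p)
        = p / 2 * (a ^ 2 - b ^ 2) / ε ^ (2 - p) := by ring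
    rw [hdiff]
    -- a^2 - b^2 = (a+b) c ≤ 2 ε c
    have h1 : p / 2 * (a ^ 2 - b ^ 2) ≤ p * (ε * c) := by
      rw [hc]
      have hf : (a + b) * (a - b) ≤ 2 * ε * (a - b) :=
        mul_le_mul_of_nonneg_right (by linarith) (by linarith)
      nlinarith [mul_le_mul_of_nonneg_left hf (show (0:ℝ) ≤ p / 2 by linarith)]
    have hcpn : (0:ℝ) ≤ c ^ p := Real.rpow_nonneg hc0 _
    have hmul : ε * c ≤ c ^ p * ε ^ (2 - p) := by
      have hcp : c ^ p * c ^ (1 - p) = c := by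
        rw [← Real.rpow_add' hc0 (by norm_num), show p + (1 - p) = 1 by ring, Real.rpow_one]
      have hle : c ^ (1 - p) ≤ ε ^ (1 - p) :=
        Real.rpow_le_rpow hc0 (by rw [hc]; linarith) (by linarith)
      have hεe : ε * ε ^ (1 - p) = ε ^ (2 - p) := by
        calc ε * ε ^ (1 - p) = ε ^ (1:ℝ) * ε ^ (1 - p) := by rw [Real.rpow_one]
          _ = ε ^ (2 - p) := by rw [← Real.rpow_add hεpos, show (1:ℝ) + (1 - p) = 2 - p by ring]
      have hc1pn : (0:ℝ) ≤ c ^ (1 - p) := Real.rpow_nonneg hc0 _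
      calc ε * c = ε * (c ^ p * c ^ (1 - p)) := by rw [hcp]
        _ = c ^ p * (ε * c ^ (1 - p)) := by ring
        _ ≤ c ^ p * (ε * ε ^ (1 - p)) := by
            apply mul_le_mul_of_nonneg_left ?_ hcpn
            exact mul_le_mul_of_nonneg_left hle hεpos.le
        _ = c ^ p * ε ^ (2 - p) := by rw [hεe]
    rw [div_le_iff₀ hε2p]
    have k1 : p * (ε * c) ≤ p * (c ^ p * ε ^ (2 - p)) := mul_le_mul_of_nonneg_left hmul hp.le
    have k2 : p * (c ^ p * ε ^ (2 - p)) ≤ 1 * (c ^ p * ε ^ (2 - p)) :=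
      mul_le_mul_of_nonneg_right (by linarith) (mul_nonneg hcpn hε2p.le)
    rw [one_mul] at k2
    linarith
  · -- a ≥ ε : ψ(a²) = a^p
    have hsq_a : ¬ (a ^ 2 < ε ^ 2) := by push_neg; nlinarith
    rw [psiSm, if_neg hsq_a, sq_rpow ha]
    have hsub : a ^ p ≤ b ^ p + c ^ p := by
      have h3 := rpow_add_le hb hc0 hp.le hp1.le
      rw [show b + c = a by rw [hc]; ring] at h3
      exact h3
    have hge2 : (b ^ 2 : ℝ) ^ (p / 2) ≤ psiSm p ε (b ^ 2) :=
      psi_ge hp hp1 hε (by positivity)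
    rw [sq_rpow hb] at hge2
    linarith

lemma psi_sq_diff (hp : 0 < p) (hp1 : p < 1) (hε : 0 ≤ ε) (a b : ℝ) :
    |psiSm p ε (a ^ 2) - psiSm p ε (b ^ 2)| ≤ |a - b| ^ p := by
  have key : ∀ x y : ℝ, 0 ≤ y → y ≤ x →
      |psiSm p ε (x ^ 2) - psiSm p ε (y ^ 2)| ≤ (x - y) ^ p := by
    intro x y hy hyx
    rw [abs_of_nonneg (by
      have := psi_mono hp hp1 hε (t₁ := y ^ 2) (t₂ := x ^ 2) (by positivity) (by nlinarith)
      linarith)]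
    exact psi_sq_diff_aux hp hp1 hε hy hyx
  have habs : ∀ z : ℝ, psiSm p ε (z ^ 2) = psiSm p ε (|z| ^ 2) := by
    intro z; rw [sq_abs]
  rcases le_total |b| |a| with h | h
  · calc |psiSm p ε (a ^ 2) - psiSm p ε (b ^ 2)|
        = |psiSm p ε (|a| ^ 2) - psiSm p ε (|b| ^ 2)| := by rw [← habs, ← habs]
      _ ≤ (|a| - |b|) ^ p := key _ _ (abs_nonneg _) h
      _ ≤ |a - b| ^ p := Real.rpow_le_rpow (by linarith) (by
            have := abs_sub_abs_le_abs_sub a b; linarith) hp.le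
  · calc |psiSm p ε (a ^ 2) - psiSm p ε (b ^ 2)|
        = |psiSm p ε (|b| ^ 2) - psiSm p ε (|a| ^ 2)| := by
          rw [← habs, ← habs, abs_sub_comm]
      _ ≤ (|b| - |a|) ^ p := key _ _ (abs_nonneg _) h
      _ ≤ |a - b| ^ p := Real.rpow_le_rpow (by linarith) (by
            have := abs_sub_abs_le_abs_sub b a; rw [abs_sub_comm] at this; linarith) hp.le

lemma continuous_rpow_const (hq : 0 ≤ (q : ℝ)) : Continuous fun x : ℝ => x ^ q :=
  continuous_iff_continuousAt.2 fun x => Real.continuousAt_rpow_const x q (Or.inr hq)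

lemma measurable_psi (hp : 0 < p) (ε : ℝ) : Measurable (psiSm p ε) := by
  unfold psiSm
  exact Measurable.ite measurableSet_Iio
    (((measurable_const.mul measurable_id).div_const _).add measurable_const)
    (continuous_rpow_const (by positivity)).measurable

lemma psi_cont (hp : 0 < p) (hp1 : p < 1) {ε : ℕ → ℝ} {ε₀ t : ℝ} (hε : ∀ k, 0 ≤ ε k)
    (hε₀ : 0 ≤ ε₀) (hεlim : Tendsto ε atTop (nhds ε₀)) (ht : 0 ≤ t) :
    Tendsto (fun k => psiSm p (ε k) t) atTop (nhds (psiSm p ε₀ t)) := by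
  rcases hε₀.lt_or_eq with hpos | hzero
  · -- ε₀ > 0 : use the max-min representation and continuity
    set F : ℝ → ℝ := fun e =>
      max (t ^ (p / 2)) (min (p / 2 * t / e ^ (2 - p) + (1 - p / 2) * e ^ p) (e ^ p)) with hF
    have h2p : ContinuousAt (fun e : ℝ => e ^ (2 - p)) ε₀ :=
      Real.continuousAt_rpow_const _ _ (Or.inl hpos.ne')
    have hpp : ContinuousAt (fun e : ℝ => e ^ p) ε₀ :=
      Real.continuousAt_rpow_const _ _ (Or.inl hpos.ne')
    have hne : ε₀ ^ (2 - p) ≠ 0 := (Real.rpow_pos_of_pos hpos _).ne'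
    have hcont : ContinuousAt F ε₀ :=
      continuousAt_const.max
        (((continuousAt_const.div h2p hne).add (continuousAt_const.mul hpp)).min hpp)
    have htendF : Tendsto (fun k => F (ε k)) atTop (nhds (F ε₀)) := hcont.tendsto.comp hεlim
    have hev : ∀ᶠ k in atTop, F (ε k) = psiSm p (ε k) t := by
      filter_upwards [hεlim.eventually (eventually_gt_nhds hpos)] with k hk
      exact (psi_eq_maxmin hp hp1 hk ht).symm
    rw [show psiSm p ε₀ t = F ε₀ from psi_eq_maxmin hp hp1 hpos ht] 
    exact htendF.congr' hev
  · -- ε₀ = 0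
    subst hzero
    have h0 : psiSm p 0 t = t ^ (p / 2) := by
      unfold psiSm
      rw [if_neg]
      push_neg
      simpa using ht
    rw [h0]
    have heps : Tendsto (fun k => ε k ^ p) atTop (nhds 0) := by
      have hc : ContinuousAt (fun e : ℝ => e ^ p) 0 :=
        Real.continuousAt_rpow_const _ _ (Or.inr hp.le)
      have := hc.tendsto.comp hεlim
      simpa [Real.zero_rpow hp.ne', Function.comp_def] using this
    have hsq : Tendsto (fun k => |psiSm p (ε k) t - t ^ (p / 2)|) atTop (nhds 0) :=
      squeeze_zero (fun k => abs_nonneg _) (fun k => psi_sub_abs hp hp1 (hε k) ht) heps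
    rw [← tendsto_sub_nhds_zero_iff]
    exact (tendsto_zero_iff_abs_tendsto_zero _).2 hsq

lemma abs_rpow_le_one_add (hp : 0 < p) (hp1 : p < 1) (x : ℝ) : |x| ^ p ≤ 1 + |x| := by
  rcases le_total |x| 1 with h | h
  · have := Real.rpow_le_one (abs_nonneg x) h hp.le
    have h0 : (0:ℝ) ≤ |x| := abs_nonneg x
    linarith
  · calc |x| ^ p ≤ |x| ^ (1:ℝ) := Real.rpow_le_rpow_of_exponent_le h (by linarith)
      _ = |x| := Real.rpow_one _
      _ ≤ 1 + |x| := by linarith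

lemma integrable_psi (hp : 0 < p) (hp1 : p < 1) {d : ℕ} {Ω : Set (Fin d → ℝ)}
    (hfin : volume Ω < ⊤) {f : (Fin d → ℝ) → ℝ} (hf : IntegrableOn f Ω) (hε : 0 ≤ ε) :
    IntegrableOn (fun x => psiSm p ε (f x ^ 2)) Ω := by
  have hmeas : AEStronglyMeasurable (fun x => psiSm p ε (f x ^ 2)) (volume.restrict Ω) := by
    have h1 : AEMeasurable (fun x => f x ^ 2) (volume.restrict Ω) :=
      hf.aemeasurable.pow_const 2
    exact ((measurable_psi hp ε).comp_aemeasurable h1).aestronglyMeasurable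
  have hg : IntegrableOn (fun x => (ε ^ p + 1) + |f x|) Ω := by
    exact (integrableOn_const hfin.ne).add hf.abs
  refine Integrable.mono' hg hmeas ?_
  · refine Filter.Eventually.of_forall fun x => ?_
    have h0 : 0 ≤ psiSm p ε (f x ^ 2) := psi_nonneg hp hp1 hε (by positivity)
    rw [Real.norm_eq_abs, abs_of_nonneg h0]
    have h1 : psiSm p ε (f x ^ 2) ≤ ε ^ p + (f x ^ 2) ^ (p / 2) :=
      psi_le hp hp1 hε (by positivity)
    have h2 : (f x ^ 2) ^ (p / 2) = |f x| ^ p := by rw [← sq_abs, sq_rpow (abs_nonneg _)]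
    have h3 := abs_rpow_le_one_add hp hp1 (f x)
    calc psiSm p ε (f x ^ 2) ≤ ε ^ p + (f x ^ 2) ^ (p / 2) := h1
      _ ≤ ε ^ p + (1 + |f x|) := by rw [h2]; linarith
      _ = (ε ^ p + 1) + |f x| := by ring

lemma rpow_split (hp : 0 < p) (hp1 : p < 1) {δ r : ℝ} (hδ : 0 < δ) (hr : 0 ≤ r) :
    r ^ p ≤ δ ^ p + δ ^ (p - 1) * r := by
  have hδp1 : (0:ℝ) < δ ^ (p - 1) := Real.rpow_pos_of_pos hδ _
  rcases le_total r δ with h | h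
  · have h1 : r ^ p ≤ δ ^ p := Real.rpow_le_rpow hr h hp.le
    nlinarith
  · have hrpos : 0 < r := lt_of_lt_of_le hδ h
    have h1 : r ^ p = r ^ (p - 1) * r := by
      rw [show p = p - 1 + 1 by ring, Real.rpow_add hrpos, Real.rpow_one]
      ring_nf
    have h2 : r ^ (p - 1) ≤ δ ^ (p - 1) :=
      Real.rpow_le_rpow_of_nonpos hδ h (by linarith)
    have h3 : (0:ℝ) ≤ δ ^ p := (Real.rpow_pos_of_pos hδ _).le
    calc r ^ p = r ^ (p - 1) * r := h1
      _ ≤ δ ^ (p - 1) * r := mul_le_mul_of_nonneg_right h2 hr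
      _ ≤ δ ^ p + δ ^ (p - 1) * r := by linarith

end PsiAux

open PsiAux
theorem stmt7 (d : ℕ) (Ω : Set (Fin d → ℝ)) (hΩ : MeasurableSet Ω)
    (hfin : volume Ω < ⊤) (p : ℝ) (hp : 0 < p) (hp1 : p < 1)
    (u : ℕ → (Fin d → ℝ) → ℝ) (ulim : (Fin d → ℝ) → ℝ)
    (hint : ∀ k, IntegrableOn (u k) Ω) (hintl : IntegrableOn ulim Ω)
    (hL1 : Tendsto (fun k => ∫ x in Ω, |u k x - ulim x|) atTop (nhds 0))
    (ε : ℕ → ℝ) (ε₀ : ℝ) (hε : ∀ k, 0 ≤ ε k) (hε₀ : 0 ≤ ε₀)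
    (hεlim : Tendsto ε atTop (nhds ε₀)) :
    Tendsto (fun k => ∫ x in Ω, psiSm p (ε k) ((u k x) ^ 2)) atTop
      (nhds (∫ x in Ω, psiSm p ε₀ ((ulim x) ^ 2))) := by
  obtain ⟨M, hM⟩ := hεlim.bddAbove_range
  have hM' : ∀ k, ε k ≤ M := fun k => hM (Set.mem_range_self k)
  have hM0 : 0 ≤ M := (hε 0).trans (hM' 0)
  set J : ℕ → ℝ := fun k => ∫ x in Ω, psiSm p (ε k) ((ulim x) ^ 2) with hJdef
  set I : ℕ → ℝ := fun k => ∫ x in Ω, psiSm p (ε k) ((u k x) ^ 2) with hIdef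
  set L : ℝ := ∫ x in Ω, psiSm p ε₀ ((ulim x) ^ 2) with hLdef
  -- Step 1 : J → L by dominated convergence
  have hJlim : Tendsto J atTop (nhds L) := by
    apply tendsto_integral_of_dominated_convergence
      (bound := fun x => (M ^ p + 1) + |ulim x|)
    · exact fun k => (integrable_psi hp hp1 hfin hintl (hε k)).aestronglyMeasurable
    · exact (integrableOn_const hfin.ne).add hintl.abs
    · intro k
      refine Filter.Eventually.of_forall fun x => ?_
      have h0 : 0 ≤ psiSm p (ε k) (ulim x ^ 2) := psi_nonneg hp hp1 (hε k) (by positivity)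
      rw [Real.norm_eq_abs, abs_of_nonneg h0]
      have h1 : psiSm p (ε k) (ulim x ^ 2) ≤ ε k ^ p + (ulim x ^ 2) ^ (p / 2) :=
        psi_le hp hp1 (hε k) (by positivity)
      have h2 : (ulim x ^ 2) ^ (p / 2) = |ulim x| ^ p := by
        rw [← sq_abs, sq_rpow (abs_nonneg _)]
      have h3 := abs_rpow_le_one_add hp hp1 (ulim x)
      have h4 : ε k ^ p ≤ M ^ p := Real.rpow_le_rpow (hε k) (hM' k) hp.le
      calc psiSm p (ε k) (ulim x ^ 2) ≤ ε k ^ p + (ulim x ^ 2) ^ (p / 2) := h1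
        _ ≤ M ^ p + (1 + |ulim x|) := by rw [h2]; linarith
        _ = (M ^ p + 1) + |ulim x| := by ring
    · exact Filter.Eventually.of_forall fun x =>
        psi_cont hp hp1 hε hε₀ hεlim (by positivity)
  -- Step 2 : I - J → 0
  set V : ℝ := (volume Ω).toReal with hVdef
  have hV0 : 0 ≤ V := ENNReal.toReal_nonneg
  have hB0 : ∀ k, 0 ≤ ∫ x in Ω, |u k x - ulim x| := fun k =>
    integral_nonneg fun x => abs_nonneg _
  have key : ∀ (k : ℕ) (δ : ℝ), 0 < δ →
      |I k - J k| ≤ δ ^ p * V + δ ^ (p - 1) * ∫ x in Ω, |u k x - ulim x| := by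
    intro k δ hδ
    have hIk := integrable_psi hp hp1 hfin (hint k) (hε k)
    have hJk := integrable_psi hp hp1 hfin hintl (hε k)
    have hfk : IntegrableOn (fun x => |u k x - ulim x|) Ω := ((hint k).sub hintl).abs
    have hIJ : I k - J k
        = ∫ x in Ω, (psiSm p (ε k) (u k x ^ 2) - psiSm p (ε k) (ulim x ^ 2)) :=
      (integral_sub hIk hJk).symm
    rw [hIJ]
    have h1 := norm_integral_le_integral_norm
      (f := fun x => psiSm p (ε k) (u k x ^ 2) - psiSm p (ε k) (ulim x ^ 2))
      (μ := volume.restrict Ω)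
    simp only [Real.norm_eq_abs] at h1
    refine h1.trans ?_
    have hbnd : ∀ x, |psiSm p (ε k) (u k x ^ 2) - psiSm p (ε k) (ulim x ^ 2)|
        ≤ δ ^ p + δ ^ (p - 1) * |u k x - ulim x| := by
      intro x
      refine (psi_sq_diff hp hp1 (hε k) _ _).trans ?_
      exact rpow_split hp hp1 hδ (abs_nonneg _)
    have hgint : IntegrableOn (fun x => δ ^ p + δ ^ (p - 1) * |u k x - ulim x|) Ω := by
      exact (integrableOn_const hfin.ne).add (hfk.const_mul _)
    calc (∫ x in Ω, |psiSm p (ε k) (u k x ^ 2) - psiSm p (ε k) (ulim x ^ 2)|)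
        ≤ ∫ x in Ω, (δ ^ p + δ ^ (p - 1) * |u k x - ulim x|) :=
          integral_mono_of_nonneg (Filter.Eventually.of_forall fun x => abs_nonneg _)
            hgint (Filter.Eventually.of_forall hbnd)
      _ = δ ^ p * V + δ ^ (p - 1) * ∫ x in Ω, |u k x - ulim x| := by
          rw [integral_add (integrableOn_const (C := δ ^ p) hfin.ne) (hfk.const_mul _),
            integral_const, integral_const_mul, measureReal_restrict_apply_univ, Measure.real, smul_eq_mul,
            mul_comm]
  have hdiff : Tendsto (fun k => I k - J k) atTop (nhds 0) := by
    rw [Metric.tendsto_atTop]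
    intro η hη
    have hbase : 0 < η / (2 * (V + 1)) := by positivity
    set δ : ℝ := (η / (2 * (V + 1))) ^ (1 / p : ℝ) with hδdef
    have hδpos : 0 < δ := Real.rpow_pos_of_pos hbase _
    have hδp : δ ^ p = η / (2 * (V + 1)) := by
      rw [hδdef, ← Real.rpow_mul hbase.le, one_div, inv_mul_cancel₀ hp.ne', Real.rpow_one]
    have h2 : δ ^ p * V < η / 2 := by
      rw [hδp, div_mul_eq_mul_div, div_lt_div_iff₀ (by positivity) (by norm_num)]
      nlinarith
    set C : ℝ := δ ^ (p - 1) with hCdef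
    have hC0 : 0 < C := Real.rpow_pos_of_pos hδpos _
    obtain ⟨N, hN⟩ := (Metric.tendsto_atTop.1 hL1) (η / (2 * C)) (by positivity)
    refine ⟨N, fun k hk => ?_⟩
    have hBk : (∫ x in Ω, |u k x - ulim x|) < η / (2 * C) := by
      have := hN k hk
      rw [Real.dist_eq, sub_zero, abs_of_nonneg (hB0 k)] at this
      exact this
    have h3 : C * (∫ x in Ω, |u k x - ulim x|) < η / 2 := by
      have h4 := mul_lt_mul_of_pos_left hBk hC0
      have h5 : C * (η / (2 * C)) = η / 2 := by field_simp
      rw [h5] at h4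
      exact h4
    rw [Real.dist_eq, sub_zero]
    calc |I k - J k| ≤ δ ^ p * V + C * ∫ x in Ω, |u k x - ulim x| := key k δ hδpos
      _ < η / 2 + η / 2 := by linarith
      _ = η := by ring
  have := hdiff.add hJlim
  rw [zero_add] at this
  refine this.congr fun k => ?_
  ring
end

section
/- Let Ω ⊂ ℝ^d have finite measure, p ∈ (0,1), ε > 0. Then the map u ↦ G_ε(u) := ∫_Ω ψ_ε(u(x)²) dx is Fréchet differentiable from L²(Ω) to ℝ with derivative G_ε'(u)h = ∫_Ω 2·u(x)·ψ_ε'(u(x)²)·h(x) dx. -/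
open Set MeasureTheory Filter Topology

/-- The derivative ψ_ε'. -/
noncomputable def psiSmDeriv (p ε t : ℝ) : ℝ :=
  if t = 0 then (p / 2) * ε ^ (p - 2) else (p / 2) * min (ε ^ (p - 2)) (t ^ ((p - 2) / 2))

noncomputable def phiF (p ε s : ℝ) : ℝ := psiSm p ε (s ^ 2)
noncomputable def phiD (p ε s : ℝ) : ℝ := 2 * s * psiSmDeriv p ε (s ^ 2)

/-- `(s^2)^c = |s|^(2c)`. -/
lemma sq_rpow_eq (s c : ℝ) : ((s ^ 2 : ℝ)) ^ c = |s| ^ (2 * c) := by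
  rw [← sq_abs s, ← Real.rpow_natCast |s| 2, ← Real.rpow_mul (abs_nonneg s)]
  norm_num

lemma eps_sq_rpow_eq {ε : ℝ} (hε : 0 < ε) (c : ℝ) : ((ε ^ 2 : ℝ)) ^ c = ε ^ (2 * c) := by
  rw [sq_rpow_eq, abs_of_pos hε]

lemma phiD_eq_low {p ε : ℝ} (hp2 : p ≤ 2) (hε : 0 < ε) {s : ℝ} (hs : s ^ 2 ≤ ε ^ 2) :
    phiD p ε s = p * ε ^ (p - 2) * s := by
  unfold phiD psiSmDeriv
  by_cases h0 : s = 0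
  · simp [h0]
  · have hs2 : (0 : ℝ) < s ^ 2 := by positivity
    rw [if_neg hs2.ne']
    have hle : ε ^ (p - 2) ≤ (s ^ 2 : ℝ) ^ ((p - 2) / 2) := by
      have := Real.rpow_le_rpow_of_nonpos hs2 hs (by linarith : (p - 2) / 2 ≤ 0)
      rwa [eps_sq_rpow_eq hε, mul_div_cancel₀ _ (two_ne_zero)] at this
    rw [min_eq_left hle]; ring

lemma phiD_eq_high {p ε : ℝ} (hp2 : p ≤ 2) (hε : 0 < ε) {s : ℝ} (hs : ε ^ 2 ≤ s ^ 2) :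
    phiD p ε s = p * s * (s ^ 2 : ℝ) ^ ((p - 2) / 2) := by
  have hs2 : (0 : ℝ) < s ^ 2 := lt_of_lt_of_le (by positivity) hs
  have h0 : s ≠ 0 := by intro h; rw [h] at hs2; simp at hs2
  unfold phiD psiSmDeriv
  rw [if_neg hs2.ne']
  have hle : (s ^ 2 : ℝ) ^ ((p - 2) / 2) ≤ ε ^ (p - 2) := by
    have := Real.rpow_le_rpow_of_nonpos (by positivity) hs (by linarith : (p - 2) / 2 ≤ 0)
    rwa [eps_sq_rpow_eq hε, mul_div_cancel₀ _ (two_ne_zero)] at this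
  rw [min_eq_right hle]; ring

lemma phiF_eq_low {p ε : ℝ} (hε : 0 < ε) {s : ℝ} (hs : s ^ 2 ≤ ε ^ 2) :
    phiF p ε s = (p / 2) * ε ^ (p - 2) * s ^ 2 + (1 - p / 2) * ε ^ p := by
  have hinv : ε ^ (p - 2) = (ε ^ (2 - p) : ℝ)⁻¹ := by
    rw [show (p - 2 : ℝ) = -(2 - p) by ring, Real.rpow_neg hε.le]
  unfold phiF psiSm
  rcases lt_or_eq_of_le hs with h | h
  · rw [if_pos h, hinv]; ring
  · rw [if_neg (by rw [h]; exact lt_irrefl _), h, eps_sq_rpow_eq hε,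
      mul_div_cancel₀ _ (two_ne_zero : (2:ℝ) ≠ 0)]
    have h2 : (ε ^ 2 : ℝ) = ε ^ (2 : ℝ) := by
      rw [← Real.rpow_natCast ε 2]; norm_num
    have : ε ^ (p - 2) * ε ^ 2 = ε ^ p := by
      rw [h2, ← Real.rpow_add hε]; norm_num
    rw [show p / 2 * ε ^ (p - 2) * ε ^ 2 = p / 2 * (ε ^ (p - 2) * ε ^ 2) by ring, this]
    ring

lemma phiF_eq_high {p ε : ℝ} {s : ℝ} (hs : ε ^ 2 ≤ s ^ 2) :
    phiF p ε s = (s ^ 2 : ℝ) ^ (p / 2) := by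
  unfold phiF psiSm
  rw [if_neg (not_lt.2 hs)]

lemma q_hasDerivAt (p ε : ℝ) (x : ℝ) :
    HasDerivAt (fun t : ℝ => (p / 2) * ε ^ (p - 2) * t ^ 2 + (1 - p / 2) * ε ^ p)
      (p * ε ^ (p - 2) * x) x := by
  have := ((hasDerivAt_pow 2 x).const_mul ((p / 2) * ε ^ (p - 2))).add_const ((1 - p / 2) * ε ^ p)
  refine this.congr_deriv ?_
  push_cast; ring

lemma r_hasDerivAt (p : ℝ) {x : ℝ} (hx : x ≠ 0) :
    HasDerivAt (fun t : ℝ => ((t ^ 2 : ℝ)) ^ (p / 2)) (p * x * (x ^ 2 : ℝ) ^ ((p - 2) / 2)) x := by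
  have h2 : HasDerivAt (fun t : ℝ => t ^ 2) (2 * x) x := by
    simpa using hasDerivAt_pow 2 x
  have := h2.rpow_const (p := p / 2) (Or.inl (pow_ne_zero 2 hx))
  convert this using 1
  rw [show (p - 2) / 2 = p / 2 - 1 by ring]
  ring

lemma phiF_hasDerivAt_eps {p ε : ℝ} (hp2 : p ≤ 2) (hε : 0 < ε) :
    HasDerivAt (phiF p ε) (p * ε ^ (p - 2) * ε) ε := by
  have hval : phiF p ε ε = (p / 2) * ε ^ (p - 2) * ε ^ 2 + (1 - p / 2) * ε ^ p :=
    phiF_eq_low hε le_rfl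
  have hleft : HasDerivWithinAt (phiF p ε) (p * ε ^ (p - 2) * ε) (Iic ε) ε := by
    refine ((q_hasDerivAt p ε ε).hasDerivWithinAt).congr_of_eventuallyEq ?_ hval
    have h0 : ∀ᶠ t in 𝓝[Iic ε] ε, (0 : ℝ) < t :=
      eventually_nhdsWithin_of_eventually_nhds (eventually_gt_nhds hε)
    filter_upwards [h0, eventually_mem_nhdsWithin] with t ht0 htle
    exact phiF_eq_low hε (by nlinarith [mem_Iic.1 htle])
  have hr : HasDerivAt (fun t : ℝ => ((t ^ 2 : ℝ)) ^ (p / 2)) (p * ε ^ (p - 2) * ε) ε := by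
    have := r_hasDerivAt p hε.ne'
    convert this using 1
    rw [eps_sq_rpow_eq hε, mul_div_cancel₀ _ (two_ne_zero : (2:ℝ) ≠ 0)]
    ring
  have hright : HasDerivWithinAt (phiF p ε) (p * ε ^ (p - 2) * ε) (Ici ε) ε := by
    refine (hr.hasDerivWithinAt).congr (fun t ht => ?_) ?_
    · exact phiF_eq_high (by nlinarith [mem_Ici.1 ht])
    · exact phiF_eq_high le_rfl
  have := hleft.union hright
  rwa [Iic_union_Ici, hasDerivWithinAt_univ] at this

lemma phiF_even (p ε t : ℝ) : phiF p ε (-t) = phiF p ε t := by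
  unfold phiF; rw [neg_pow]; norm_num

lemma phiF_hasDerivAt {p ε : ℝ} (hp2 : p ≤ 2) (hε : 0 < ε) (s : ℝ) :
    HasDerivAt (phiF p ε) (phiD p ε s) s := by
  rcases lt_trichotomy (s ^ 2) (ε ^ 2) with h | h | h
  · rw [phiD_eq_low hp2 hε h.le]
    refine (q_hasDerivAt p ε s).congr_of_eventuallyEq ?_
    have hev : ∀ᶠ t in 𝓝 s, t ^ 2 < ε ^ 2 :=
      ((continuous_pow 2).continuousAt (x := s)).eventually_lt continuousAt_const h
    filter_upwards [hev] with t ht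
    exact phiF_eq_low hε ht.le
  · have habs : |s| = ε := by
      have h1 : |s| ^ 2 = ε ^ 2 := by rwa [sq_abs]
      nlinarith [abs_nonneg s]
    rcases abs_eq hε.le |>.1 habs with rfl | rfl
    · rw [phiD_eq_low hp2 hε h.le]
      exact phiF_hasDerivAt_eps hp2 hε
    · rw [phiD_eq_low hp2 hε h.le]
      have hder := phiF_hasDerivAt_eps hp2 hε
      have hneg : HasDerivAt (fun x : ℝ => -x) (-1) (-ε) := hasDerivAt_neg (-ε)
      have hder' : HasDerivAt (phiF p ε) (p * ε ^ (p - 2) * ε) (-(-ε)) := by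
        rwa [neg_neg]
      have hcomp := hder'.comp (-ε) hneg
      rw [show phiF p ε ∘ Neg.neg = phiF p ε from funext fun t => phiF_even p ε t] at hcomp
      refine hcomp.congr_deriv ?_; ring
  · have hs0 : s ≠ 0 := by intro h0; rw [h0] at h; nlinarith
    rw [phiD_eq_high hp2 hε h.le]
    refine (r_hasDerivAt p hs0).congr_of_eventuallyEq ?_
    have hev : ∀ᶠ t in 𝓝 s, ε ^ 2 < t ^ 2 :=
      continuousAt_const.eventually_lt ((continuous_pow 2).continuousAt (x := s)) h
    filter_upwards [hev] with t ht
    exact phiF_eq_high ht.le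

lemma phiD_odd (p ε t : ℝ) : phiD p ε (-t) = - phiD p ε t := by
  unfold phiD; rw [neg_sq]; ring

lemma phiD_zero (p ε : ℝ) : phiD p ε 0 = 0 := by
  unfold phiD; ring

lemma phiD_eq_pow {p ε : ℝ} (hp2 : p ≤ 2) (hε : 0 < ε) {s : ℝ} (hs : ε ≤ s) :
    phiD p ε s = p * s ^ (p - 1) := by
  have hs0 : 0 < s := lt_of_lt_of_le hε hs
  have h1 : s ^ (p - 1) = s ^ (p - 2) * s := by
    rw [show p - 1 = p - 2 + 1 by ring, Real.rpow_add_one hs0.ne']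
  rw [phiD_eq_high hp2 hε (by nlinarith), sq_rpow_eq, abs_of_pos hs0,
    mul_div_cancel₀ _ (two_ne_zero : (2:ℝ) ≠ 0), h1]
  ring

lemma lip_high {p ε : ℝ} (hp : 0 < p) (hp1 : p < 1) (hε : 0 < ε) {a b : ℝ}
    (ha : ε ≤ a) (hb : ε ≤ b) :
    |phiD p ε b - phiD p ε a| ≤ p * ε ^ (p - 2) * |b - a| := by
  have key := Convex.norm_image_sub_le_of_norm_hasDerivWithin_le
    (f := fun t : ℝ => p * t ^ (p - 1)) (f' := fun x : ℝ => p * ((p - 1) * x ^ (p - 1 - 1)))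
    (s := Set.Ici ε) (C := p * ε ^ (p - 2)) (x := a) (y := b)
    (fun x hx => ((Real.hasDerivAt_rpow_const (p := p - 1)
      (Or.inl (lt_of_lt_of_le hε hx).ne')).const_mul p).hasDerivWithinAt)
    (fun x hx => by
      have hx0 : 0 < x := lt_of_lt_of_le hε hx
      have he : p - 1 - 1 = p - 2 := by ring
      rw [he]
      have h1 : x ^ (p - 2) ≤ ε ^ (p - 2) :=
        Real.rpow_le_rpow_of_nonpos hε hx (by linarith)
      have h2 : (0:ℝ) ≤ x ^ (p - 2) := (Real.rpow_pos_of_pos hx0 _).le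
      rw [Real.norm_eq_abs, abs_mul, abs_mul, abs_of_pos hp, abs_of_nonneg h2,
        abs_of_neg (by linarith : p - 1 < 0)]
      nlinarith [mul_le_mul_of_nonneg_left h1 hp.le,
        mul_nonneg (mul_nonneg hp.le hp.le) h2])
    (convex_Ici ε) ha hb
  simp only [Real.norm_eq_abs] at key
  rwa [phiD_eq_pow (by linarith) hε ha, phiD_eq_pow (by linarith) hε hb]

lemma lip_nonneg {p ε : ℝ} (hp : 0 < p) (hp1 : p < 1) (hε : 0 < ε) {a b : ℝ}
    (ha : 0 ≤ a) (hab : a ≤ b) :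
    |phiD p ε b - phiD p ε a| ≤ p * ε ^ (p - 2) * (b - a) := by
  have hp2 : p ≤ 2 := by linarith
  have hL : 0 < p * ε ^ (p - 2) := mul_pos hp (Real.rpow_pos_of_pos hε _)
  rcases le_or_gt b ε with hbε | hbε
  · rw [phiD_eq_low hp2 hε (by nlinarith), phiD_eq_low hp2 hε (by nlinarith),
      show p * ε ^ (p - 2) * b - p * ε ^ (p - 2) * a = p * ε ^ (p - 2) * (b - a) by ring,
      abs_mul, abs_of_pos hL, abs_of_nonneg (by linarith)]
  · rcases le_or_gt ε a with haε | haε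
    · have := lip_high hp hp1 hε haε (haε.trans hab)
      rwa [abs_of_nonneg (by linarith : (0:ℝ) ≤ b - a)] at this
    · calc |phiD p ε b - phiD p ε a|
          ≤ |phiD p ε b - phiD p ε ε| + |phiD p ε ε - phiD p ε a| := abs_sub_le _ _ _
        _ ≤ p * ε ^ (p - 2) * (b - ε) + p * ε ^ (p - 2) * (ε - a) := by
            have h1 := lip_high hp hp1 hε le_rfl hbε.le
            rw [abs_of_nonneg (by linarith : (0:ℝ) ≤ b - ε)] at h1
            have h2 : |phiD p ε ε - phiD p ε a| ≤ p * ε ^ (p - 2) * (ε - a) := by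
              rw [phiD_eq_low hp2 hε le_rfl, phiD_eq_low hp2 hε (by nlinarith),
                show p * ε ^ (p - 2) * ε - p * ε ^ (p - 2) * a
                  = p * ε ^ (p - 2) * (ε - a) by ring,
                abs_mul, abs_of_pos hL, abs_of_nonneg (by linarith)]
            exact add_le_add h1 h2
        _ = p * ε ^ (p - 2) * (b - a) := by ring

lemma phiD_lipschitz {p ε : ℝ} (hp : 0 < p) (hp1 : p < 1) (hε : 0 < ε) (a b : ℝ) :
    |phiD p ε b - phiD p ε a| ≤ p * ε ^ (p - 2) * |b - a| := by
  have hL : 0 < p * ε ^ (p - 2) := mul_pos hp (Real.rpow_pos_of_pos hε _)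
  wlog hab : a ≤ b generalizing a b
  · rw [abs_sub_comm, abs_sub_comm b a]; exact this b a (by linarith)
  rw [abs_of_nonneg (by linarith : (0:ℝ) ≤ b - a)]
  rcases le_or_gt 0 a with ha | ha
  · exact lip_nonneg hp hp1 hε ha hab
  · rcases le_or_gt b 0 with hb | hb
    · have := lip_nonneg hp hp1 hε (by linarith : (0:ℝ) ≤ -b) (by linarith : -b ≤ -a)
      rw [phiD_odd, phiD_odd,
        show -phiD p ε a - -phiD p ε b = phiD p ε b - phiD p ε a by ring] at this
      linarith [this, abs_nonneg (phiD p ε b - phiD p ε a)]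
    · calc |phiD p ε b - phiD p ε a|
          ≤ |phiD p ε b - phiD p ε 0| + |phiD p ε 0 - phiD p ε a| := abs_sub_le _ _ _
        _ ≤ p * ε ^ (p - 2) * (b - 0) + p * ε ^ (p - 2) * (-a - 0) := by
            refine add_le_add (lip_nonneg hp hp1 hε le_rfl hb.le) ?_
            have h3 := lip_nonneg hp hp1 hε le_rfl (by linarith : (0:ℝ) ≤ -a)
            rw [phiD_odd, phiD_zero, sub_zero, abs_neg] at h3
            rw [phiD_zero, zero_sub, abs_neg]
            exact h3
        _ = p * ε ^ (p - 2) * (b - a) := by ring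

lemma phiF_taylor {p ε : ℝ} (hp : 0 < p) (hp1 : p < 1) (hε : 0 < ε) (a b : ℝ) :
    |phiF p ε b - phiF p ε a - phiD p ε a * (b - a)| ≤ p * ε ^ (p - 2) * (b - a) ^ 2 := by
  have hL0 : 0 ≤ p * ε ^ (p - 2) := (mul_pos hp (Real.rpow_pos_of_pos hε _)).le
  have key := Convex.norm_image_sub_le_of_norm_hasDerivWithin_le
    (f := fun x : ℝ => phiF p ε x - phiD p ε a * x)
    (f' := fun x : ℝ => phiD p ε x - phiD p ε a)
    (s := uIcc a b) (C := p * ε ^ (p - 2) * |b - a|) (x := a) (y := b)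
    (fun x _ => by
      have h1 := (phiF_hasDerivAt (by linarith : p ≤ 2) hε x).sub
        ((hasDerivAt_id x).const_mul (phiD p ε a))
      simp only [mul_one] at h1
      exact h1.hasDerivWithinAt)
    (fun x hx => by
      have h1 := phiD_lipschitz hp hp1 hε a x
      have h2 : |x - a| ≤ |b - a| := by
        rcases le_total a b with hcase | hcase
        · rw [uIcc_of_le hcase] at hx
          rw [abs_of_nonneg (by linarith [hx.1] : (0:ℝ) ≤ x - a),
            abs_of_nonneg (by linarith : (0:ℝ) ≤ b - a)]
          linarith [hx.2]
        · rw [uIcc_of_ge hcase] at hx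
          rw [abs_of_nonpos (by linarith [hx.2] : x - a ≤ 0),
            abs_of_nonpos (by linarith : b - a ≤ 0)]
          linarith [hx.1]
      calc ‖phiD p ε x - phiD p ε a‖ ≤ p * ε ^ (p - 2) * |x - a| := h1
        _ ≤ p * ε ^ (p - 2) * |b - a| := mul_le_mul_of_nonneg_left h2 hL0)
    (convex_uIcc a b) left_mem_uIcc right_mem_uIcc
  have e1 : (phiF p ε b - phiD p ε a * b) - (phiF p ε a - phiD p ε a * a)
      = phiF p ε b - phiF p ε a - phiD p ε a * (b - a) := by ring
  simp only [Real.norm_eq_abs] at key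
  rw [e1] at key
  calc |phiF p ε b - phiF p ε a - phiD p ε a * (b - a)|
      ≤ p * ε ^ (p - 2) * |b - a| * |b - a| := key
    _ = p * ε ^ (p - 2) * (b - a) ^ 2 := by
        rw [mul_assoc, abs_mul_abs_self, ← sq]

lemma phiD_bound {p ε : ℝ} (hp : 0 < p) (hp1 : p < 1) (hε : 0 < ε) (s : ℝ) :
    |phiD p ε s| ≤ p * ε ^ (p - 1) := by
  have hp2 : p ≤ 2 := by linarith
  have hee : ε ^ (p - 1) = ε ^ (p - 2) * ε := by
    rw [show p - 1 = p - 2 + 1 by ring, Real.rpow_add_one hε.ne']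
  rcases le_or_gt (s ^ 2) (ε ^ 2) with h | h
  · rw [phiD_eq_low hp2 hε h, abs_mul, abs_mul, abs_of_pos hp,
      abs_of_pos (Real.rpow_pos_of_pos hε _)]
    have hsa : |s| ≤ ε := by nlinarith [sq_abs s, abs_nonneg s]
    calc p * ε ^ (p - 2) * |s| ≤ p * ε ^ (p - 2) * ε :=
          mul_le_mul_of_nonneg_left hsa
            (mul_nonneg hp.le (Real.rpow_pos_of_pos hε (p - 2)).le)
      _ = p * ε ^ (p - 1) := by rw [mul_assoc, hee]
  · rw [phiD_eq_high hp2 hε h.le, sq_rpow_eq,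
      mul_div_cancel₀ _ (two_ne_zero : (2:ℝ) ≠ 0)]
    have hse : ε ≤ |s| := by nlinarith [sq_abs s, abs_nonneg s]
    have hs0 : (0:ℝ) < |s| := lt_of_lt_of_le hε hse
    have hX : (0:ℝ) < |s| ^ (p - 2) := Real.rpow_pos_of_pos hs0 _
    have h1 : |s| * |s| ^ (p - 2) = |s| ^ (p - 1) := by
      rw [show p - 1 = p - 2 + 1 by ring, Real.rpow_add_one hs0.ne']; ring
    rw [abs_mul, abs_mul, abs_of_pos hp, abs_of_pos hX, mul_assoc, h1]
    exact mul_le_mul_of_nonneg_left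
      (Real.rpow_le_rpow_of_nonpos hε hse (by linarith)) hp.le

lemma phiF_abs_bound {p ε : ℝ} (hp : 0 < p) (hp1 : p < 1) (hε : 0 < ε) (s : ℝ) :
    |phiF p ε s| ≤ ε ^ p + ε ^ (p - 2) * s ^ 2 := by
  have hεp : (0:ℝ) < ε ^ p := Real.rpow_pos_of_pos hε _
  have hεp2 : (0:ℝ) < ε ^ (p - 2) := Real.rpow_pos_of_pos hε _
  rcases le_or_gt (s ^ 2) (ε ^ 2) with h | h
  · have t1 : (0:ℝ) ≤ p / 2 * ε ^ (p - 2) * s ^ 2 :=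
      mul_nonneg (mul_nonneg (by linarith) hεp2.le) (sq_nonneg s)
    have t2 : (0:ℝ) ≤ (1 - p / 2) * ε ^ p := mul_nonneg (by linarith) hεp.le
    have t3 : p / 2 * ε ^ (p - 2) * s ^ 2 ≤ 1 * (ε ^ (p - 2) * s ^ 2) := by
      rw [mul_assoc]
      exact mul_le_mul_of_nonneg_right (by linarith) (mul_nonneg hεp2.le (sq_nonneg s))
    have t4 : (1 - p / 2) * ε ^ p ≤ 1 * ε ^ p :=
      mul_le_mul_of_nonneg_right (by linarith) hεp.le
    rw [phiF_eq_low hε h, abs_of_nonneg (by linarith)]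
    linarith
  · rw [phiF_eq_high h.le, abs_of_nonneg (Real.rpow_nonneg (sq_nonneg s) _)]
    have hs2 : (0:ℝ) < s ^ 2 := lt_of_le_of_lt (by positivity) h
    have h1 : ((s ^ 2 : ℝ)) ^ (p / 2) = (s ^ 2 : ℝ) ^ (p / 2 - 1) * s ^ 2 := by
      nth_rewrite 1 [show p / 2 = p / 2 - 1 + 1 by ring]
      rw [Real.rpow_add_one hs2.ne']
    have h2 : ((s ^ 2 : ℝ)) ^ (p / 2 - 1) ≤ ((ε ^ 2 : ℝ)) ^ (p / 2 - 1) :=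
      Real.rpow_le_rpow_of_nonpos (by positivity) h.le (by linarith)
    have h3 : ((ε ^ 2 : ℝ)) ^ (p / 2 - 1) = ε ^ (p - 2) := by
      rw [eps_sq_rpow_eq hε, show (2:ℝ) * (p / 2 - 1) = p - 2 by ring]
    rw [h1]
    nlinarith [mul_le_mul_of_nonneg_right (h2.trans_eq h3) hs2.le]

lemma phiF_cont {p ε : ℝ} (hp2 : p ≤ 2) (hε : 0 < ε) : Continuous (phiF p ε) :=
  continuous_iff_continuousAt.2 fun x => (phiF_hasDerivAt hp2 hε x).continuousAt

lemma phiD_cont {p ε : ℝ} (hp : 0 < p) (hp1 : p < 1) (hε : 0 < ε) :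
    Continuous (phiD p ε) := by
  have hL0 : (0:ℝ) ≤ p * ε ^ (p - 2) := (mul_pos hp (Real.rpow_pos_of_pos hε _)).le
  have : LipschitzWith (Real.toNNReal (p * ε ^ (p - 2))) (phiD p ε) := by
    refine LipschitzWith.of_dist_le_mul fun a b => ?_
    rw [Real.dist_eq, Real.dist_eq, Real.coe_toNNReal _ hL0]
    exact phiD_lipschitz hp hp1 hε b a
  exact this.continuous

theorem stmt8 (d : ℕ) (Ω : Set (Fin d → ℝ)) (hΩ : MeasurableSet Ω)
    (hfin : volume Ω < ⊤) (p ε : ℝ) (hp : 0 < p) (hp1 : p < 1) (hε : 0 < ε)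
    (u : Lp ℝ 2 (volume.restrict Ω)) :
    ∃ D : Lp ℝ 2 (volume.restrict Ω) →L[ℝ] ℝ,
      HasFDerivAt
        (fun v : Lp ℝ 2 (volume.restrict Ω) =>
          ∫ x, psiSm p ε ((v x) ^ 2) ∂(volume.restrict Ω)) D u ∧
      ∀ h : Lp ℝ 2 (volume.restrict Ω),
        D h = ∫ x, 2 * u x * psiSmDeriv p ε ((u x) ^ 2) * h x ∂(volume.restrict Ω) := by
  have hp2 : p ≤ 2 := by linarith
  haveI : IsFiniteMeasure (volume.restrict Ω) := ⟨by rwa [Measure.restrict_apply_univ]⟩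
  set L : ℝ := p * ε ^ (p - 2) with hL
  have hLpos : 0 < L := mul_pos hp (Real.rpow_pos_of_pos hε _)
  set w0 : (Fin d → ℝ) → ℝ := fun x => phiD p ε (u x) with hw0def
  have hw0meas : AEStronglyMeasurable w0 (volume.restrict Ω) :=
    (phiD_cont hp hp1 hε).comp_aestronglyMeasurable (Lp.aestronglyMeasurable u)
  have hw0 : MemLp w0 2 (volume.restrict Ω) :=
    MemLp.of_bound hw0meas (p * ε ^ (p - 1))
      (Filter.Eventually.of_forall fun x => by
        simpa [Real.norm_eq_abs] using phiD_bound hp hp1 hε (u x))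
  set w : Lp ℝ 2 (volume.restrict Ω) := hw0.toLp w0 with hwdef
  have hwcoe : (w : (Fin d → ℝ) → ℝ) =ᵐ[volume.restrict Ω] w0 := hw0.coeFn_toLp
  have Dapply : ∀ h : Lp ℝ 2 (volume.restrict Ω),
      (innerSL ℝ w) h = ∫ x, w0 x * h x ∂(volume.restrict Ω) := by
    intro h
    rw [innerSL_apply_apply, L2.inner_def]
    refine integral_congr_ae ?_
    filter_upwards [hwcoe] with x hx
    rw [hx]
    simp [RCLike.inner_apply, mul_comm]
  have hint_phi : ∀ v : Lp ℝ 2 (volume.restrict Ω),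
      Integrable (fun x => phiF p ε (v x)) (volume.restrict Ω) := by
    intro v
    refine Integrable.mono'
      ((integrable_const (ε ^ p)).add
        (((Lp.memLp v).integrable_sq).const_mul (ε ^ (p - 2))))
      ((phiF_cont hp2 hε).comp_aestronglyMeasurable (Lp.aestronglyMeasurable v))
      (Filter.Eventually.of_forall fun x => ?_)
    simpa [Real.norm_eq_abs] using phiF_abs_bound hp hp1 hε (v x)
  have hint_mul : ∀ f g : Lp ℝ 2 (volume.restrict Ω),
      Integrable (fun x => f x * g x) (volume.restrict Ω) := by
    intro f g
    have := L2.integrable_inner (𝕜 := ℝ) f g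
    simpa [RCLike.inner_apply, mul_comm] using this
  have key : ∀ v : Lp ℝ 2 (volume.restrict Ω),
      ‖(∫ x, phiF p ε (v x) ∂(volume.restrict Ω))
        - (∫ x, phiF p ε (u x) ∂(volume.restrict Ω))
        - (innerSL ℝ w) (v - u)‖ ≤ L * ‖v - u‖ ^ 2 := by
    intro v
    set h : Lp ℝ 2 (volume.restrict Ω) := v - u with hh
    have hco : (h : (Fin d → ℝ) → ℝ) =ᵐ[volume.restrict Ω] fun x => v x - u x :=
      Lp.coeFn_sub v u
    have hih : Integrable (fun x => w0 x * h x) (volume.restrict Ω) := by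
      refine (hint_mul w h).congr ?_
      filter_upwards [hwcoe] with x hx
      rw [hx]
    have hsq : Integrable (fun x => (h x) ^ 2) (volume.restrict Ω) :=
      (Lp.memLp h).integrable_sq
    have i3 : Integrable (fun x => phiF p ε (v x) - phiF p ε (u x)) (volume.restrict Ω) :=
      (hint_phi v).sub (hint_phi u)
    have e1 : (∫ x, phiF p ε (v x) ∂(volume.restrict Ω))
        - (∫ x, phiF p ε (u x) ∂(volume.restrict Ω)) - (innerSL ℝ w) h
        = ∫ x, (phiF p ε (v x) - phiF p ε (u x) - w0 x * h x) ∂(volume.restrict Ω) := by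
      rw [Dapply h, integral_sub i3 hih,
        integral_sub (hint_phi v) (hint_phi u)]
    rw [e1]
    have hIabs : Integrable
        (fun x => ‖phiF p ε (v x) - phiF p ε (u x) - w0 x * h x‖) (volume.restrict Ω) :=
      (i3.sub hih).norm
    have hb : (fun x => ‖phiF p ε (v x) - phiF p ε (u x) - w0 x * h x‖)
        ≤ᵐ[volume.restrict Ω] fun x => L * (h x) ^ 2 := by
      filter_upwards [hco] with x hx
      rw [hx]
      simpa [Real.norm_eq_abs, hw0def] using phiF_taylor hp hp1 hε (u x) (v x)
    have hnorm : ∫ x, (h x) ^ 2 ∂(volume.restrict Ω) = ‖h‖ ^ 2 := by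
      rw [← real_inner_self_eq_norm_sq h, L2.inner_def]
      refine integral_congr_ae (Filter.Eventually.of_forall fun x => ?_)
      simp [RCLike.inner_apply, sq]
    calc ‖∫ x, (phiF p ε (v x) - phiF p ε (u x) - w0 x * h x) ∂(volume.restrict Ω)‖
        ≤ ∫ x, ‖phiF p ε (v x) - phiF p ε (u x) - w0 x * h x‖ ∂(volume.restrict Ω) :=
          norm_integral_le_integral_norm _
      _ ≤ ∫ x, L * (h x) ^ 2 ∂(volume.restrict Ω) :=
          integral_mono_ae hIabs (hsq.const_mul L) hb
      _ = L * ∫ x, (h x) ^ 2 ∂(volume.restrict Ω) := integral_const_mul L _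
      _ = L * ‖h‖ ^ 2 := by rw [hnorm]
  refine ⟨innerSL ℝ w, ?_, ?_⟩
  · rw [hasFDerivAt_iff_isLittleO_nhds_zero]
    rw [Asymptotics.isLittleO_iff]
    intro c hc
    filter_upwards [Metric.ball_mem_nhds (0 : Lp ℝ 2 (volume.restrict Ω))
      (div_pos hc hLpos)] with k hk
    have hkn : ‖k‖ ≤ c / L := by
      rw [Metric.mem_ball, dist_zero_right] at hk
      exact hk.le
    have hk2 : ‖k‖ * L ≤ c := (le_div_iff₀ hLpos).1 hkn
    have h2 := key (u + k)
    rw [add_sub_cancel_left] at h2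
    simp only [phiF] at h2
    exact h2.trans (by nlinarith [norm_nonneg k,
      mul_le_mul_of_nonneg_right hk2 (norm_nonneg k)])
  · intro h
    rw [Dapply h]
    refine integral_congr_ae (Filter.Eventually.of_forall fun x => ?_)
    simp only [hw0def, phiD]
end

section
/- Let V be a real Hilbert space with compact dense embedding into L²(Ω) for a bounded measurable Ω ⊂ ℝ^d, let F : V → ℝ be weakly lower semicontinuous and bounded below by an affine function (F(u) ≥ ⟨g,u⟩ + c for some g ∈ V*, c ∈ ℝ), let α > 0, β > 0, p ∈ (0,1). Then the problem min_{u ∈ V} F(u) + (α/2)‖u‖_V² + β∫_Ω |u(x)|^p dx attains its minimum. -/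
open Set MeasureTheory Filter Topology

local notation "⟪" x ", " y "⟫" => @inner ℝ _ _ x y

lemma weak_seq_compact {V : Type*} [NormedAddCommGroup V] [InnerProductSpace ℝ V] [CompleteSpace V]
    (u : ℕ → V) (R : ℝ) (hR : ∀ n, ‖u n‖ ≤ R) :
    ∃ (φ : ℕ → ℕ) (w : V), StrictMono φ ∧
      ∀ f : V →L[ℝ] ℝ, Tendsto (fun n => f (u (φ n))) atTop (𝓝 (f w)) := by
  classical
  have hScomp : IsCompact (Set.univ.pi (fun i : ℕ => Set.Icc (-(‖u i‖ * R)) (‖u i‖ * R))) :=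
    isCompact_univ_pi (fun i => isCompact_Icc)
  have hmem : ∀ n, (fun i => ⟪u i, u n⟫) ∈
      Set.univ.pi (fun i : ℕ => Set.Icc (-(‖u i‖ * R)) (‖u i‖ * R)) := by
    intro n i _
    have h1 : |⟪u i, u n⟫| ≤ ‖u i‖ * ‖u n‖ := abs_real_inner_le_norm (u i) (u n)
    have h2 : ‖u i‖ * ‖u n‖ ≤ ‖u i‖ * R := mul_le_mul_of_nonneg_left (hR n) (norm_nonneg _)
    exact abs_le.mp (h1.trans h2)
  obtain ⟨L, -, φ, hφ, hconv⟩ := hScomp.tendsto_subseq hmem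
  have hLi : ∀ i, Tendsto (fun n => ⟪u i, u (φ n)⟫) atTop (𝓝 (L i)) := by
    intro i
    exact tendsto_pi_nhds.mp hconv i
  set W := (Submodule.span ℝ (Set.range u)).topologicalClosure with hWdef
  haveI : CompleteSpace W := (Submodule.isClosed_topologicalClosure _).completeSpace_coe
  have huW : ∀ n, u n ∈ W :=
    fun n => Submodule.le_topologicalClosure _ (Submodule.subset_span ⟨n, rfl⟩)
  have hspan : ∀ z ∈ Submodule.span ℝ (Set.range u),
      ∃ l, Tendsto (fun n => ⟪z, u (φ n)⟫) atTop (𝓝 l) := by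
    intro z hz
    induction hz using Submodule.span_induction with
    | mem x hx =>
      obtain ⟨i, rfl⟩ := hx
      exact ⟨L i, hLi i⟩
    | zero => exact ⟨0, by simpa using (tendsto_const_nhds : Tendsto (fun _ : ℕ => (0:ℝ)) atTop _)⟩
    | add x y hx hy ihx ihy =>
      obtain ⟨l1, h1⟩ := ihx
      obtain ⟨l2, h2⟩ := ihy
      exact ⟨l1 + l2, by simpa [inner_add_left] using h1.add h2⟩
    | smul a x hx ih =>
      obtain ⟨l, h⟩ := ih
      exact ⟨a * l, by simpa [inner_smul_left] using h.const_mul a⟩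
  have hRnn : (0:ℝ) ≤ R := le_trans (norm_nonneg _) (hR 0)
  have hclos : ∀ z ∈ W, ∃ l, Tendsto (fun n => ⟪z, u (φ n)⟫) atTop (𝓝 l) := by
    intro z hz
    have hc : CauchySeq (fun n => ⟪z, u (φ n)⟫) := by
      rw [Metric.cauchySeq_iff]
      intro ε hε
      have hz' : z ∈ closure ((Submodule.span ℝ (Set.range u) : Submodule ℝ V) : Set V) := hz
      have hεpos : 0 < ε / (3 * (R + 1)) := by positivity
      obtain ⟨z', hz'mem, hdist⟩ := Metric.mem_closure_iff.mp hz' _ hεpos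
      obtain ⟨l, hl⟩ := hspan z' hz'mem
      have hcb : CauchySeq (fun n => ⟪z', u (φ n)⟫) := hl.cauchySeq
      rw [Metric.cauchySeq_iff] at hcb
      obtain ⟨N, hN⟩ := hcb (ε / 3) (by positivity)
      refine ⟨N, fun n hn m hm => ?_⟩
      have key : ∀ k, |⟪z, u (φ k)⟫ - ⟪z', u (φ k)⟫| < ε / 3 := by
        intro k
        have : ⟪z, u (φ k)⟫ - ⟪z', u (φ k)⟫ = ⟪z - z', u (φ k)⟫ := (inner_sub_left _ _ _).symm
        rw [this]
        have h1 : |⟪z - z', u (φ k)⟫| ≤ ‖z - z'‖ * ‖u (φ k)‖ := abs_real_inner_le_norm _ _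
        have h2 : ‖z - z'‖ * ‖u (φ k)‖ ≤ ‖z - z'‖ * R :=
          mul_le_mul_of_nonneg_left (hR _) (norm_nonneg _)
        have h3 : ‖z - z'‖ < ε / (3 * (R + 1)) := by rwa [dist_eq_norm] at hdist
        have h4 : ‖z - z'‖ * R < ε / 3 := by
          calc ‖z - z'‖ * R ≤ ε / (3 * (R + 1)) * R := by
                exact mul_le_mul_of_nonneg_right h3.le hRnn
            _ < ε / 3 := by
                rw [div_mul_eq_mul_div, div_lt_div_iff₀ (by positivity) (by norm_num)]
                nlinarith
        exact lt_of_le_of_lt (h1.trans h2) h4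
      have hmn := hN n hn m hm
      rw [Real.dist_eq] at hmn ⊢
      have e1 := key n
      have e2 := key m
      have : ⟪z, u (φ n)⟫ - ⟪z, u (φ m)⟫ =
          (⟪z, u (φ n)⟫ - ⟪z', u (φ n)⟫) + (⟪z', u (φ n)⟫ - ⟪z', u (φ m)⟫)
          + (⟪z', u (φ m)⟫ - ⟪z, u (φ m)⟫) := by ring
      rw [this]
      calc |_ + _ + _| ≤ |⟪z, u (φ n)⟫ - ⟪z', u (φ n)⟫| + |⟪z', u (φ n)⟫ - ⟪z', u (φ m)⟫|
            + |⟪z', u (φ m)⟫ - ⟪z, u (φ m)⟫| := abs_add_three _ _ _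
        _ < ε / 3 + ε / 3 + ε / 3 := by
            refine add_lt_add (add_lt_add e1 hmn) ?_
            rw [abs_sub_comm]; exact e2
        _ = ε := by ring
    exact cauchySeq_tendsto_of_complete hc
  have hall : ∀ z : V, ∃ l, Tendsto (fun n => ⟪z, u (φ n)⟫) atTop (𝓝 l) := by
    intro z
    have heq : ∀ k, ⟪z, u (φ k)⟫ = ⟪(W.orthogonalProjectionOnto z : V), u (φ k)⟫ := by
      intro k
      have hperp : z - (W.orthogonalProjectionOnto z : V) ∈ Wᗮ :=
        W.sub_starProjection_mem_orthogonal z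
      have h0 : ⟪u (φ k), z - (W.orthogonalProjectionOnto z : V)⟫ = 0 :=
        (Submodule.mem_orthogonal W _).mp hperp _ (huW _)
      have h1 : ⟪z - (W.orthogonalProjectionOnto z : V), u (φ k)⟫ = 0 := by
        rw [real_inner_comm]; exact h0
      rw [inner_sub_left] at h1
      linarith
    obtain ⟨l, hl⟩ := hclos _ (W.orthogonalProjectionOnto z).2
    exact ⟨l, by simpa only [← heq] using hl⟩
  choose l hl using hall
  have hladd : ∀ x y : V, l (x + y) = l x + l y := by
    intro x y
    exact tendsto_nhds_unique (hl (x + y)) (by simpa [inner_add_left] using (hl x).add (hl y))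
  have hlsmul : ∀ (a : ℝ) (x : V), l (a • x) = a * l x := by
    intro a x
    exact tendsto_nhds_unique (hl (a • x)) (by simpa [inner_smul_left] using (hl x).const_mul a)
  have hlbound : ∀ z : V, |l z| ≤ R * ‖z‖ := by
    intro z
    refine le_of_tendsto (hl z).abs (Filter.Eventually.of_forall fun n => ?_)
    have h1 : |⟪z, u (φ n)⟫| ≤ ‖z‖ * ‖u (φ n)‖ := abs_real_inner_le_norm _ _
    have h2 : ‖z‖ * ‖u (φ n)‖ ≤ ‖z‖ * R := mul_le_mul_of_nonneg_left (hR _) (norm_nonneg _)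
    calc |⟪z, u (φ n)⟫| ≤ ‖z‖ * R := h1.trans h2
      _ = R * ‖z‖ := mul_comm _ _
  let flin : V →ₗ[ℝ] ℝ :=
    { toFun := l, map_add' := hladd, map_smul' := hlsmul }
  let f : V →L[ℝ] ℝ := LinearMap.mkContinuous flin R (fun x => by
    simpa [flin, Real.norm_eq_abs] using hlbound x)
  refine ⟨φ, (InnerProductSpace.toDual ℝ V).symm f, hφ, ?_⟩
  intro ψ
  set y := (InnerProductSpace.toDual ℝ V).symm ψ with hy
  have hψ : ∀ x : V, ψ x = ⟪y, x⟫ := by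
    intro x
    rw [hy, InnerProductSpace.toDual_symm_apply]
  have h1 : Tendsto (fun n => ⟪y, u (φ n)⟫) atTop (𝓝 (l y)) := hl y
  have h2 : l y = ψ ((InnerProductSpace.toDual ℝ V).symm f) := by
    have : ⟪(InnerProductSpace.toDual ℝ V).symm f, y⟫ = f y :=
      InnerProductSpace.toDual_symm_apply
    rw [hψ, real_inner_comm, this]
    rfl
  rw [← h2]
  simpa only [hψ] using h1

lemma cont_abs_rpow {p : ℝ} (hp : 0 < p) : Continuous (fun t : ℝ => |t| ^ p) := by
  rw [continuous_iff_continuousAt]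
  intro t
  exact (Real.continuousAt_rpow_const _ _ (Or.inr hp.le)).comp continuous_abs.continuousAt

lemma integrable_abs_rpow {X : Type*} [MeasurableSpace X] {μ : Measure X} [IsFiniteMeasure μ]
    {p : ℝ} (hp : 0 < p) (hp2 : p ≤ 2) (f : Lp ℝ 2 μ) :
    Integrable (fun x => |(f : X → ℝ) x| ^ p) μ := by
  have hmeas : AEStronglyMeasurable (fun x => |(f : X → ℝ) x| ^ p) μ :=
    (cont_abs_rpow hp).comp_aestronglyMeasurable (Lp.aestronglyMeasurable f)
  have hint2 : Integrable (fun x => ‖(f : X → ℝ) x‖ ^ (2:ℝ)) μ := by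
    have := (Lp.memLp f).integrable_norm_rpow (by norm_num) (by norm_num)
    simpa using this
  refine Integrable.mono' (hint2.add (integrable_const 1)) hmeas
    (Filter.Eventually.of_forall fun x => ?_)
  simp only [Pi.add_apply]
  rw [Real.norm_eq_abs, abs_of_nonneg (Real.rpow_nonneg (abs_nonneg _) _)]
  rcases le_or_gt (|(f : X → ℝ) x|) 1 with h | h
  · have h1 : |(f : X → ℝ) x| ^ p ≤ 1 := Real.rpow_le_one (abs_nonneg _) h hp.le
    have h2 : (0:ℝ) ≤ ‖(f : X → ℝ) x‖ ^ (2:ℝ) := Real.rpow_nonneg (norm_nonneg _) _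
    linarith
  · have h1 : |(f : X → ℝ) x| ^ p ≤ |(f : X → ℝ) x| ^ (2:ℝ) :=
      Real.rpow_le_rpow_of_exponent_le h.le hp2
    have h2 : ‖(f : X → ℝ) x‖ ^ (2:ℝ) = |(f : X → ℝ) x| ^ (2:ℝ) := by
      rw [Real.norm_eq_abs]
    linarith

set_option synthInstance.maxHeartbeats 1000000 in
set_option maxHeartbeats 2000000 in
theorem stmt9 (d : ℕ) (Ω : Set (Fin d → ℝ)) (hΩ : MeasurableSet Ω)
    (hbdd : Bornology.IsBounded Ω)
    {V : Type*} [NormedAddCommGroup V] [InnerProductSpace ℝ V] [CompleteSpace V]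
    (ι : V →L[ℝ] Lp ℝ 2 (volume.restrict Ω)) (hinj : Function.Injective ι)
    (hcomp : IsCompactOperator ι) (hdense : DenseRange ι)
    (F : V → ℝ)
    (hwlsc : ∀ (u : V) (un : ℕ → V),
      (∀ φ : V →L[ℝ] ℝ, Tendsto (fun n => φ (un n)) atTop (nhds (φ u))) →
      F u ≤ Filter.liminf (fun n => F (un n)) atTop)
    (g : V →L[ℝ] ℝ) (c : ℝ) (hbelow : ∀ u : V, g u + c ≤ F u)
    (α β p : ℝ) (hα : 0 < α) (hβ : 0 < β) (hp : 0 < p) (hp1 : p < 1) :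
    ∃ ubar : V, ∀ u : V,
      F ubar + α / 2 * ‖ubar‖ ^ 2 + β * ∫ x, |(ι ubar) x| ^ p ∂(volume.restrict Ω)
        ≤ F u + α / 2 * ‖u‖ ^ 2 + β * ∫ x, |(ι u) x| ^ p ∂(volume.restrict Ω) := by
  classical
  haveI hfin : IsFiniteMeasure (volume.restrict Ω) := by
    constructor
    rw [Measure.restrict_apply_univ]
    obtain ⟨r, hr⟩ := (Metric.isBounded_iff_subset_closedBall 0).mp hbdd
    exact lt_of_le_of_lt (measure_mono hr) (measure_closedBall_lt_top)
  set G : V → ℝ := fun u => ∫ x, |(ι u) x| ^ p ∂(volume.restrict Ω) with hGdef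
  set J : V → ℝ := fun u => F u + α / 2 * ‖u‖ ^ 2 + β * G u with hJdef
  have hGnn : ∀ u : V, 0 ≤ G u := fun u =>
    integral_nonneg (fun x => Real.rpow_nonneg (abs_nonneg _) _)
  have hGint : ∀ u : V, Integrable (fun x => |(ι u) x| ^ p) (volume.restrict Ω) := fun u =>
    integrable_abs_rpow hp (by linarith) (ι u)
  have hgl : ∀ u : V, -(‖g‖ * ‖u‖) ≤ g u := by
    intro u
    have h : |g u| ≤ ‖g‖ * ‖u‖ := by
      have := g.le_opNorm u
      rwa [Real.norm_eq_abs] at this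
    linarith [(abs_le.mp h).1]
  -- J is bounded below
  have hJlb : ∀ u : V, c - ‖g‖ ^ 2 / (2 * α) ≤ J u := by
    intro u
    have key : ‖g‖ * ‖u‖ ≤ α / 2 * ‖u‖ ^ 2 + ‖g‖ ^ 2 / (2 * α) := by
      rw [← sub_nonneg]
      have h : α / 2 * ‖u‖ ^ 2 + ‖g‖ ^ 2 / (2 * α) - ‖g‖ * ‖u‖
          = (α * ‖u‖ - ‖g‖) ^ 2 / (2 * α) := by
        field_simp
        ring
      rw [h]
      positivity
    have h1 := hbelow u
    have h2 := hgl u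
    have h3 := hGnn u
    have h4 : 0 ≤ β * G u := mul_nonneg hβ.le h3
    simp only [hJdef]
    linarith
  -- infimum
  have hne : (Set.range J).Nonempty := ⟨J 0, 0, rfl⟩
  have hbb : BddBelow (Set.range J) := by
    refine ⟨c - ‖g‖ ^ 2 / (2 * α), ?_⟩
    rintro x ⟨u, rfl⟩
    exact hJlb u
  set m := sInf (Set.range J) with hmdef
  have hmle : ∀ u : V, m ≤ J u := fun u => csInf_le hbb ⟨u, rfl⟩
  -- minimizing sequence
  have hmin : ∀ n : ℕ, ∃ u : V, J u < m + 1 / (n + 1) := by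
    intro n
    have h : m < m + 1 / (n + 1) := by
      have : (0:ℝ) < 1 / ((n:ℝ) + 1) := by positivity
      linarith
    obtain ⟨x, ⟨u, rfl⟩, hx⟩ := exists_lt_of_csInf_lt hne h
    exact ⟨u, hx⟩
  choose u0 hu0 using hmin
  have hJtend : Tendsto (fun n => J (u0 n)) atTop (𝓝 m) := by
    have h1 : Tendsto (fun n : ℕ => m + 1 / ((n:ℝ) + 1)) atTop (𝓝 (m + 0)) :=
      tendsto_const_nhds.add tendsto_one_div_add_atTop_nhds_zero_nat
    rw [add_zero] at h1
    exact tendsto_of_tendsto_of_tendsto_of_le_of_le tendsto_const_nhds h1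
      (fun n => hmle _) (fun n => (hu0 n).le)
  have hJub : ∀ n, J (u0 n) ≤ m + 1 := by
    intro n
    refine (hu0 n).le.trans (add_le_add_right ?_ m)
    rw [div_le_one (by positivity)]
    have : (0:ℝ) ≤ (n:ℝ) := Nat.cast_nonneg n
    linarith
  -- norm bound
  set R : ℝ := Real.sqrt (max (4 * (m + 1 - c + ‖g‖ ^ 2 / α) / α) 0) with hRdef
  have hRb : ∀ n, ‖u0 n‖ ≤ R := by
    intro n
    have key : ‖g‖ * ‖u0 n‖ ≤ α / 4 * ‖u0 n‖ ^ 2 + ‖g‖ ^ 2 / α := by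
      rw [← sub_nonneg]
      have h : α / 4 * ‖u0 n‖ ^ 2 + ‖g‖ ^ 2 / α - ‖g‖ * ‖u0 n‖
          = (α * ‖u0 n‖ - 2 * ‖g‖) ^ 2 / (4 * α) := by
        field_simp
        ring
      rw [h]
      positivity
    have h1 := hbelow (u0 n)
    have h2 := hgl (u0 n)
    have h4 : 0 ≤ β * G (u0 n) := mul_nonneg hβ.le (hGnn _)
    have h5 := hJub n
    rw [hJdef] at h5
    have h6 : α / 4 * ‖u0 n‖ ^ 2 ≤ m + 1 - c + ‖g‖ ^ 2 / α := by linarith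
    have h7 : ‖u0 n‖ ^ 2 ≤ 4 * (m + 1 - c + ‖g‖ ^ 2 / α) / α := by
      rw [le_div_iff₀ hα]
      linarith
    have h8 : ‖u0 n‖ ^ 2 ≤ max (4 * (m + 1 - c + ‖g‖ ^ 2 / α) / α) 0 :=
      h7.trans (le_max_left _ _)
    calc ‖u0 n‖ = Real.sqrt (‖u0 n‖ ^ 2) := by
          rw [Real.sqrt_sq (norm_nonneg _)]
      _ ≤ R := Real.sqrt_le_sqrt h8
  have hR0 : 0 ≤ R := Real.sqrt_nonneg _
  -- weak limit
  obtain ⟨φ1, ubar, hφ1, hweak1⟩ := weak_seq_compact u0 R hRb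
  set v1 : ℕ → V := fun n => u0 (φ1 n) with hv1def
  -- strong convergence of images via compactness
  obtain ⟨K, hK, hKmem⟩ := hcomp
  obtain ⟨ε, hε, hball⟩ := Metric.mem_nhds_iff.mp hKmem
  set cc : ℝ := ε / (2 * (R + 1)) with hccdef
  have hcc : 0 < cc := by positivity
  have hKin : ∀ n, ι (cc • v1 n) ∈ K := by
    intro n
    apply hball
    rw [Metric.mem_ball, dist_zero_right, norm_smul, Real.norm_eq_abs, abs_of_pos hcc]
    have h1 : ‖v1 n‖ ≤ R := hRb _
    have h2 : cc * ‖v1 n‖ ≤ cc * R := mul_le_mul_of_nonneg_left h1 hcc.le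
    have h3 : cc * R < ε := by
      rw [hccdef, div_mul_eq_mul_div, div_lt_iff₀ (by positivity)]
      nlinarith
    linarith
  obtain ⟨y, -, φ2, hφ2, hy⟩ := hK.tendsto_subseq hKin
  set v2 : ℕ → V := fun n => v1 (φ2 n) with hv2def
  have hstrong0 : Tendsto (fun n => ι (v2 n)) atTop (𝓝 (cc⁻¹ • y)) := by
    have h1 : Tendsto (fun n => cc⁻¹ • (ι (cc • v1 (φ2 n)))) atTop (𝓝 (cc⁻¹ • y)) :=
      hy.const_smul _
    convert h1 using 2 with n
    rw [_root_.map_smul, smul_smul, inv_mul_cancel₀ hcc.ne', one_smul]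
  have hweak2 : ∀ f : V →L[ℝ] ℝ, Tendsto (fun n => f (v2 n)) atTop (𝓝 (f ubar)) :=
    fun f => (hweak1 f).comp hφ2.tendsto_atTop
  -- identify the strong limit with ι ubar
  have hqeq : cc⁻¹ • y = ι ubar := by
    have hz : ∀ z : Lp ℝ 2 (volume.restrict Ω), ⟪z, cc⁻¹ • y⟫ = ⟪z, ι ubar⟫ := by
      intro z
      have h1 : Tendsto (fun n => ⟪z, ι (v2 n)⟫) atTop (𝓝 ⟪z, cc⁻¹ • y⟫) :=
        ((innerSL ℝ z).continuous.tendsto _).comp hstrong0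
      have h2 : Tendsto (fun n => ⟪z, ι (v2 n)⟫) atTop (𝓝 ⟪z, ι ubar⟫) := by
        have := hweak2 ((innerSL ℝ z).comp ι)
        simpa using this
      exact tendsto_nhds_unique h1 h2
    have h := hz (cc⁻¹ • y - ι ubar)
    rw [← sub_eq_zero, ← inner_self_eq_zero (𝕜 := ℝ)]
    have : ⟪cc⁻¹ • y - ι ubar, cc⁻¹ • y - ι ubar⟫
        = ⟪cc⁻¹ • y - ι ubar, cc⁻¹ • y⟫ - ⟪cc⁻¹ • y - ι ubar, ι ubar⟫ := inner_sub_right _ _ _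
    rw [this]
    linarith
  have hstrong : Tendsto (fun n => ι (v2 n)) atTop (𝓝 (ι ubar)) := hqeq ▸ hstrong0
  -- a.e. convergent subsequence
  haveI : Fact ((1:ENNReal) ≤ 2) := ⟨by norm_num⟩
  have hmeas : TendstoInMeasure (volume.restrict Ω) (fun n => ((ι (v2 n)) : (Fin d → ℝ) → ℝ)) atTop (ι ubar) :=
    tendstoInMeasure_of_tendsto_Lp hstrong
  obtain ⟨φ3, hφ3, hae⟩ := hmeas.exists_seq_tendsto_ae
  set v3 : ℕ → V := fun n => v2 (φ3 n) with hv3def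
  -- extract convergence of F values
  have hFbdd : ∀ n, F (v3 n) ∈ Set.Icc (c - ‖g‖ * R) (m + 1) := by
    intro n
    constructor
    · have h1 := hbelow (v3 n)
      have h2 := hgl (v3 n)
      have h3 : ‖g‖ * ‖v3 n‖ ≤ ‖g‖ * R := mul_le_mul_of_nonneg_left (hRb _) (norm_nonneg _)
      linarith
    · have h1 : J (v3 n) ≤ m + 1 := hJub _
      rw [hJdef] at h1
      have h2 : 0 ≤ β * G (v3 n) := mul_nonneg hβ.le (hGnn _)
      have h3 : 0 ≤ α / 2 * ‖v3 n‖ ^ 2 := by positivity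
      linarith
  obtain ⟨A, -, φ4, hφ4, hFA⟩ := tendsto_subseq_of_bounded (Metric.isBounded_Icc _ _) hFbdd
  set v4 : ℕ → V := fun n => v3 (φ4 n) with hv4def
  -- extract convergence of norms
  have hnbdd : ∀ n, ‖v4 n‖ ∈ Set.Icc (0:ℝ) R := fun n => ⟨norm_nonneg _, hRb _⟩
  obtain ⟨r, -, φ5, hφ5, hnr⟩ := tendsto_subseq_of_bounded (Metric.isBounded_Icc _ _) hnbdd
  set v5 : ℕ → V := fun n => v4 (φ5 n) with hv5def
  -- collected facts about v5
  have hweak5 : ∀ f : V →L[ℝ] ℝ, Tendsto (fun n => f (v5 n)) atTop (𝓝 (f ubar)) :=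
    fun f => (((hweak2 f).comp hφ3.tendsto_atTop).comp hφ4.tendsto_atTop).comp hφ5.tendsto_atTop
  have hFA5 : Tendsto (fun n => F (v5 n)) atTop (𝓝 A) := hFA.comp hφ5.tendsto_atTop
  have hnr5 : Tendsto (fun n => ‖v5 n‖) atTop (𝓝 r) := hnr
  have hJ5 : Tendsto (fun n => J (v5 n)) atTop (𝓝 m) :=
    (((hJtend.comp hφ1.tendsto_atTop).comp hφ2.tendsto_atTop).comp
      hφ3.tendsto_atTop).comp ((hφ4.comp hφ5).tendsto_atTop)
  have hae5 : ∀ᵐ x ∂(volume.restrict Ω), Tendsto (fun n => (ι (v5 n) : (Fin d → ℝ) → ℝ) x) atTop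
      (𝓝 ((ι ubar : (Fin d → ℝ) → ℝ) x)) := by
    refine hae.mono fun x hx => ?_
    exact hx.comp ((hφ4.comp hφ5).tendsto_atTop)
  -- limit of G values
  set C : ℝ := (m - A - α / 2 * r ^ 2) / β with hCdef
  have hGlim : Tendsto (fun n => G (v5 n)) atTop (𝓝 C) := by
    have h1 : Tendsto (fun n => (J (v5 n) - F (v5 n) - α / 2 * ‖v5 n‖ ^ 2) / β) atTop (𝓝 C) :=
      ((hJ5.sub hFA5).sub ((hnr5.pow 2).const_mul (α / 2))).div_const β
    convert h1 using 2 with n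
    rw [hJdef]
    field_simp
    ring
  have hC0 : 0 ≤ C := ge_of_tendsto hGlim (Filter.Eventually.of_forall fun n => hGnn _)
  have hr0 : 0 ≤ r := ge_of_tendsto hnr5 (Filter.Eventually.of_forall fun n => norm_nonneg _)
  -- F ubar ≤ A
  have hFub : F ubar ≤ A := by
    have h := hwlsc ubar v5 hweak5
    rwa [hFA5.liminf_eq] at h
  -- ‖ubar‖ ≤ r
  have hnub : ‖ubar‖ ≤ r := by
    have h1 : Tendsto (fun n => ⟪ubar, v5 n⟫) atTop (𝓝 (‖ubar‖ ^ 2)) := by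
      have := hweak5 (innerSL ℝ ubar)
      simpa [real_inner_self_eq_norm_sq] using this
    have h2 : Tendsto (fun n => ‖ubar‖ * ‖v5 n‖) atTop (𝓝 (‖ubar‖ * r)) :=
      hnr5.const_mul _
    have h3 : ‖ubar‖ ^ 2 ≤ ‖ubar‖ * r :=
      le_of_tendsto_of_tendsto' h1 h2 fun n => real_inner_le_norm _ _
    rcases eq_or_lt_of_le (norm_nonneg ubar) with h | h
    · rw [← h]; exact hr0
    · nlinarith
  -- G ubar ≤ C via Fatou
  have hGub : G ubar ≤ C := by
    have haemeas : ∀ n : ℕ, AEMeasurable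
        (fun x => ENNReal.ofReal (|(ι (v5 n)) x| ^ p)) (volume.restrict Ω) :=
      fun n => ((hGint (v5 n)).aestronglyMeasurable.aemeasurable).ennreal_ofReal
    have hlhs : ∫⁻ x, ENNReal.ofReal (|(ι ubar) x| ^ p) ∂(volume.restrict Ω)
        ≤ atTop.liminf fun n => ∫⁻ x, ENNReal.ofReal (|(ι (v5 n)) x| ^ p) ∂(volume.restrict Ω) := by
      have hcongr : ∫⁻ x, ENNReal.ofReal (|(ι ubar) x| ^ p) ∂(volume.restrict Ω)
          = ∫⁻ x, atTop.liminf (fun n => ENNReal.ofReal (|(ι (v5 n)) x| ^ p)) ∂(volume.restrict Ω) := by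
        refine lintegral_congr_ae (hae5.mono fun x hx => ?_)
        have h1 : Tendsto (fun n => |(ι (v5 n)) x| ^ p) atTop (𝓝 (|(ι ubar) x| ^ p)) :=
          ((cont_abs_rpow hp).continuousAt.tendsto).comp hx
        exact ((ENNReal.tendsto_ofReal h1).liminf_eq).symm
      rw [hcongr]
      exact lintegral_liminf_le' haemeas
    have heq : ∀ n : ℕ, ∫⁻ x, ENNReal.ofReal (|(ι (v5 n)) x| ^ p) ∂(volume.restrict Ω)
        = ENNReal.ofReal (G (v5 n)) := by
      intro n
      rw [hGdef]
      exact (ofReal_integral_eq_lintegral_ofReal (hGint _)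
        (Filter.Eventually.of_forall fun x => Real.rpow_nonneg (abs_nonneg _) _)).symm
    have hliminf : (atTop.liminf fun n => ∫⁻ x, ENNReal.ofReal (|(ι (v5 n)) x| ^ p) ∂(volume.restrict Ω))
        = ENNReal.ofReal C := by
      simp only [heq]
      exact (ENNReal.tendsto_ofReal hGlim).liminf_eq
    have hlhs2 : ENNReal.ofReal (G ubar) ≤ ENNReal.ofReal C := by
      rw [hGdef, ofReal_integral_eq_lintegral_ofReal (hGint _)
        (Filter.Eventually.of_forall fun x => Real.rpow_nonneg (abs_nonneg _) _)]
      rw [← hliminf]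
      exact hlhs
    exact (ENNReal.ofReal_le_ofReal_iff hC0).mp hlhs2
  -- conclusion
  refine ⟨ubar, fun u => ?_⟩
  have hfinal : J ubar ≤ J u := by
    have h1 : J ubar ≤ A + α / 2 * r ^ 2 + β * C := by
      rw [hJdef]
      have h2 : ‖ubar‖ ^ 2 ≤ r ^ 2 := by nlinarith [norm_nonneg ubar]
      have h3 : α / 2 * ‖ubar‖ ^ 2 ≤ α / 2 * r ^ 2 := by nlinarith
      have h4 : β * G ubar ≤ β * C := mul_le_mul_of_nonneg_left hGub hβ.le
      linarith
    have h2 : A + α / 2 * r ^ 2 + β * C = m := by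
      rw [hCdef, mul_div_cancel₀ _ hβ.ne']
      ring
    exact le_trans (h1.trans h2.le) (hmle u)
  exact hfinal
end

section
/- Let V be a real Hilbert space, u_k, u_{k+1} ∈ V, L_k ≥ 0, α > 0, β > 0, and suppose α⟨u_{k+1}, v⟩_V + L_k⟨u_{k+1} − u_k, v⟩_V + F'(u_k)v + 2β∫_Ω ψ'_{ε_k}(u_k²)·u_{k+1}·v dx = 0 for all v ∈ V, and F(u_{k+1}) ≤ F(u_k) + F'(u_k)(u_{k+1} − u_k) + L_k‖u_{k+1} − u_k‖_V². Then, with Φ_ε(u) := F(u) + (α/2)‖u‖_V² + β∫_Ω ψ_ε(u²) dx and ε_{k+1} ≤ ε_k, one has Φ_{ε_{k+1}}(u_{k+1}) + (α/2)‖u_{k+1} − u_k‖_V² + β∫_Ω ψ'_{ε_k}(u_k²)(u_{k+1} − u_k)² dx ≤ Φ_{ε_k}(u_k). -/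
open Set MeasureTheory Filter Topology RealInnerProductSpace

lemma rpow_tangent {q : ℝ} (hq0 : 0 < q) (hq1 : q < 1) {a b : ℝ} (ha : 0 < a) (hb : 0 ≤ b) :
    b ^ q ≤ a ^ q + q * a ^ (q - 1) * (b - a) := by
  have hs : (-1 : ℝ) ≤ b / a - 1 := by
    have : (0:ℝ) ≤ b / a := div_nonneg hb ha.le
    linarith
  have h := rpow_one_add_le_one_add_mul_self hs hq0.le hq1.le
  have h1 : (1 : ℝ) + (b / a - 1) = b / a := by ring
  rw [h1] at h
  have haq : (0:ℝ) < a ^ q := Real.rpow_pos_of_pos ha q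
  have hdiv : (b / a) ^ q = b ^ q / a ^ q := Real.div_rpow hb ha.le q
  have hsub : a ^ (q - 1) = a ^ q / a := by
    rw [Real.rpow_sub ha, Real.rpow_one]
  have h2 : b ^ q / a ^ q ≤ 1 + q * (b / a - 1) := hdiv ▸ h
  have h3 : b ^ q ≤ (1 + q * (b / a - 1)) * a ^ q := by
    rw [div_le_iff₀ haq] at h2; linarith [h2]
  calc b ^ q ≤ (1 + q * (b / a - 1)) * a ^ q := h3
    _ = a ^ q + q * (a ^ q / a) * (b - a) := by field_simp
    _ = a ^ q + q * a ^ (q - 1) * (b - a) := by rw [hsub]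

section Pointwise
variable {p ε : ℝ} (hp : 0 < p) (hp1 : p < 1) (hε : 0 < ε)

lemma sq_rpow_eq_s13 (hε : 0 < ε) (z : ℝ) : (ε ^ 2 : ℝ) ^ z = ε ^ (2 * z) := by
  rw [← Real.rpow_natCast ε 2, ← Real.rpow_mul hε.le]
  norm_num

lemma psiSm_eq_affine (hε : 0 < ε) {t : ℝ} (ht : t < ε ^ 2) :
    psiSm p ε t = (p / 2) * ε ^ (p - 2) * t + (1 - p / 2) * ε ^ p := by
  have h2p : (0:ℝ) < ε ^ (2 - p) := Real.rpow_pos_of_pos hε _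
  have hinv : ε ^ (p - 2) = (ε ^ (2 - p))⁻¹ := by
    rw [← Real.rpow_neg hε.le]; norm_num
  rw [psiSm, if_pos ht, hinv]
  field_simp

lemma psiSm_eq_rpow (hε : 0 < ε) {t : ℝ} (ht : ε ^ 2 ≤ t) :
    psiSm p ε t = t ^ (p / 2) := by
  rw [psiSm, if_neg (not_lt.2 ht)]

lemma psiSmDeriv_eq_of_le (hp1 : p < 1) (hε : 0 < ε) {t : ℝ} (ht0 : 0 ≤ t) (ht : t ≤ ε ^ 2) :
    psiSmDeriv p ε t = (p / 2) * ε ^ (p - 2) := by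
  rcases eq_or_lt_of_le ht0 with h0 | h0
  · rw [psiSmDeriv, if_pos h0.symm]
  · rw [psiSmDeriv, if_neg (ne_of_gt h0)]
    congr 1
    refine min_eq_left ?_
    have := Real.rpow_le_rpow_of_nonpos h0 ht (by linarith : (p - 2) / 2 ≤ 0)
    rwa [sq_rpow_eq_s13 hε, mul_div_cancel₀ _ (two_ne_zero)] at this

lemma psiSmDeriv_eq_of_ge (hp1 : p < 1) (hε : 0 < ε) {t : ℝ} (ht : ε ^ 2 ≤ t) :
    psiSmDeriv p ε t = (p / 2) * t ^ ((p - 2) / 2) := by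
  have hE : (0:ℝ) < ε ^ 2 := by positivity
  rw [psiSmDeriv, if_neg (ne_of_gt (lt_of_lt_of_le hE ht))]
  congr 1
  refine min_eq_right ?_
  have := Real.rpow_le_rpow_of_nonpos hE ht (by linarith : (p - 2) / 2 ≤ 0)
  rwa [sq_rpow_eq_s13 hε, mul_div_cancel₀ _ (two_ne_zero)] at this

lemma psiSmDeriv_nonneg (hp : 0 < p) (hε : 0 < ε) {t : ℝ} (ht : 0 ≤ t) :
    0 ≤ psiSmDeriv p ε t := by
  rw [psiSmDeriv]
  split
  · positivity
  · have ht' : 0 < t := lt_of_le_of_ne ht (Ne.symm (by assumption))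
    have h1 : (0:ℝ) ≤ ε ^ (p - 2) := (Real.rpow_pos_of_pos hε _).le
    have h2 : (0:ℝ) ≤ t ^ ((p - 2) / 2) := (Real.rpow_pos_of_pos ht' _).le
    have := le_min h1 h2
    positivity

lemma psiSmDeriv_le (hp : 0 < p) (hε : 0 < ε) (t : ℝ) :
    psiSmDeriv p ε t ≤ (p / 2) * ε ^ (p - 2) := by
  rw [psiSmDeriv]
  split
  · exact le_rfl
  · exact mul_le_mul_of_nonneg_left (min_le_left _ _) (by positivity)

lemma rpow_le_affine (hp : 0 < p) (hp1 : p < 1) (hε : 0 < ε) {t : ℝ} (ht : 0 ≤ t) :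
    t ^ (p / 2) ≤ (p / 2) * ε ^ (p - 2) * t + (1 - p / 2) * ε ^ p := by
  have hE : (0:ℝ) < ε ^ 2 := by positivity
  have htan := rpow_tangent (by linarith : 0 < p/2) (by linarith : p/2 < 1) hE ht
  have e1 : (ε ^ 2 : ℝ) ^ (p / 2) = ε ^ p := by
    rw [sq_rpow_eq_s13 hε]; ring_nf
  have e2 : (ε ^ 2 : ℝ) ^ (p / 2 - 1) = ε ^ (p - 2) := by
    rw [sq_rpow_eq_s13 hε]; ring_nf
  have e3 : ε ^ (p - 2) * ε ^ 2 = ε ^ p := by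
    rw [← Real.rpow_natCast ε 2, ← Real.rpow_add hε]; norm_num
  rw [e1, e2] at htan
  nlinarith [htan, e3]

lemma psiSm_le_affine (hp : 0 < p) (hp1 : p < 1) (hε : 0 < ε) {t : ℝ} (ht : 0 ≤ t) :
    psiSm p ε t ≤ (p / 2) * ε ^ (p - 2) * t + (1 - p / 2) * ε ^ p := by
  rcases lt_or_ge t (ε ^ 2) with h | h
  · rw [psiSm_eq_affine hε h]
  · rw [psiSm_eq_rpow hε h]
    exact rpow_le_affine hp hp1 hε ht

lemma psiSm_nonneg (hp : 0 < p) (hp1 : p < 1) (hε : 0 < ε) {t : ℝ} (ht : 0 ≤ t) :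
    0 ≤ psiSm p ε t := by
  rcases lt_or_ge t (ε ^ 2) with h | h
  · rw [psiSm_eq_affine hε h]
    have h1 : (0:ℝ) < ε ^ (p - 2) := Real.rpow_pos_of_pos hε _
    have h2 : (0:ℝ) < ε ^ p := Real.rpow_pos_of_pos hε _
    nlinarith [mul_nonneg (mul_nonneg (by linarith : (0:ℝ) ≤ p/2) h1.le) ht]
  · rw [psiSm_eq_rpow hε h]
    exact Real.rpow_nonneg ht _

end Pointwise

lemma psiSm_concave {p ε : ℝ} (hp : 0 < p) (hp1 : p < 1) (hε : 0 < ε) {a b : ℝ}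
    (ha : 0 ≤ a) (hb : 0 ≤ b) :
    psiSm p ε b ≤ psiSm p ε a + psiSmDeriv p ε a * (b - a) := by
  have hE : (0:ℝ) < ε ^ 2 := by positivity
  have hc : (0:ℝ) < ε ^ (p - 2) := Real.rpow_pos_of_pos hε _
  have hep : (0:ℝ) < ε ^ p := Real.rpow_pos_of_pos hε _
  have e3 : ε ^ (p - 2) * ε ^ 2 = ε ^ p := by
    rw [← Real.rpow_natCast ε 2, ← Real.rpow_add hε]; norm_num
  rcases lt_or_ge a (ε ^ 2) with haE | haE
  · rw [psiSm_eq_affine hε haE, psiSmDeriv_eq_of_le hp1 hε ha haE.le]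
    have := psiSm_le_affine hp hp1 hε hb
    linarith [this]
  · have ha' : 0 < a := lt_of_lt_of_le hE haE
    rw [psiSm_eq_rpow hε haE, psiSmDeriv_eq_of_ge hp1 hε haE]
    have hslope : a ^ ((p - 2) / 2) ≤ ε ^ (p - 2) := by
      have := Real.rpow_le_rpow_of_nonpos hE haE (by linarith : (p - 2) / 2 ≤ 0)
      rwa [sq_rpow_eq_s13 hε, mul_div_cancel₀ _ (two_ne_zero)] at this
    have hexp : a ^ ((p - 2) / 2) = a ^ (p / 2 - 1) := by congr 1; ring
    rcases lt_or_ge b (ε ^ 2) with hbE | hbE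
    · rw [psiSm_eq_affine hε hbE]
      have htanE := rpow_tangent (by linarith : 0 < p/2) (by linarith : p/2 < 1) ha' hE.le
      have e1 : (ε ^ 2 : ℝ) ^ (p / 2) = ε ^ p := by rw [sq_rpow_eq_s13 hε]; ring_nf
      rw [e1, ← hexp] at htanE
      have hbE' : b ≤ ε ^ 2 := hbE.le
      nlinarith [mul_nonneg (mul_nonneg (by linarith : (0:ℝ) ≤ p/2)
        (sub_nonneg.2 hslope)) (sub_nonneg.2 hbE'), htanE, e3]
    · rw [psiSm_eq_rpow hε hbE, hexp]
      exact rpow_tangent (by linarith) (by linarith) ha' hb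

lemma psiSm_mono_eps {p ε₁ ε₂ : ℝ} (hp : 0 < p) (hp1 : p < 1) (hε₂ : 0 < ε₂)
    (hle : ε₂ ≤ ε₁) {t : ℝ} (ht : 0 ≤ t) :
    psiSm p ε₂ t ≤ psiSm p ε₁ t := by
  have hε₁ : 0 < ε₁ := lt_of_lt_of_le hε₂ hle
  have hEle : (ε₂:ℝ) ^ 2 ≤ ε₁ ^ 2 := by nlinarith
  rcases lt_or_ge t (ε₁ ^ 2) with h1 | h1
  · rcases lt_or_ge t (ε₂ ^ 2) with h2 | h2
    · rw [psiSm_eq_affine hε₂ h2, psiSm_eq_affine hε₁ h1]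
      have hc12 : ε₁ ^ (p - 2) ≤ ε₂ ^ (p - 2) :=
        Real.rpow_le_rpow_of_nonpos hε₂ hle (by linarith)
      have hc2 : (0:ℝ) < ε₂ ^ (p - 2) := Real.rpow_pos_of_pos hε₂ _
      have e3 : ε₂ ^ (p - 2) * ε₂ ^ 2 = ε₂ ^ p := by
        rw [← Real.rpow_natCast ε₂ 2, ← Real.rpow_add hε₂]; norm_num
      -- ε₂ ^ p ≤ affine₁ (ε₂²)
      have hA : (ε₂:ℝ) ^ p ≤ (p / 2) * ε₁ ^ (p - 2) * (ε₂ ^ 2) + (1 - p / 2) * ε₁ ^ p := by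
        have := rpow_le_affine hp hp1 hε₁ (by positivity : (0:ℝ) ≤ ε₂ ^ 2)
        rwa [sq_rpow_eq_s13 hε₂, (by ring : 2 * (p/2) = p)] at this
      nlinarith [mul_nonneg (mul_nonneg (by linarith : (0:ℝ) ≤ p/2)
        (sub_nonneg.2 hc12)) (sub_nonneg.2 h2.le), hA, e3]
    · rw [psiSm_eq_rpow hε₂ h2, psiSm_eq_affine hε₁ h1]
      exact rpow_le_affine hp hp1 hε₁ ht
  · rw [psiSm_eq_rpow hε₁ h1, psiSm_eq_rpow hε₂ (le_trans hEle h1)]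


lemma measurable_psiSm (p ε : ℝ) : Measurable (psiSm p ε) := by
  unfold psiSm
  refine Measurable.ite (measurableSet_lt measurable_id measurable_const) ?_ ?_
  · exact ((measurable_const.mul measurable_id).div_const _).add_const _
  · measurability

lemma measurable_psiSmDeriv (p ε : ℝ) : Measurable (psiSmDeriv p ε) := by
  unfold psiSmDeriv
  refine Measurable.ite (measurableSet_eq_fun measurable_id measurable_const) measurable_const ?_
  refine measurable_const.mul (measurable_const.min ?_)
  measurability

open MeasureTheory in
lemma integrable_psiSm_comp {α : Type*} [MeasurableSpace α] {p ε : ℝ} (hp : 0 < p)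
    (hp1 : p < 1) (hε : 0 < ε) {μ : Measure α} [IsFiniteMeasure μ] {f : α → ℝ}
    (hf : MemLp f 2 μ) : Integrable (fun x => psiSm p ε (f x ^ 2)) μ := by
  have hm : AEStronglyMeasurable (fun x => psiSm p ε (f x ^ 2)) μ :=
    ((measurable_psiSm p ε).comp_aemeasurable
      (hf.aestronglyMeasurable.aemeasurable.pow_const 2)).aestronglyMeasurable
  refine Integrable.mono'
    (g := fun x => (p / 2 * ε ^ (p - 2)) * f x ^ 2 + (1 - p / 2) * ε ^ p)
    (((hf.integrable_sq.const_mul _).add (integrable_const _))) hm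
    (Filter.Eventually.of_forall fun x => ?_)
  rw [Real.norm_eq_abs, abs_of_nonneg (psiSm_nonneg hp hp1 hε (sq_nonneg _))]
  have := psiSm_le_affine hp hp1 hε (sq_nonneg (f x))
  linarith

open Set MeasureTheory Filter Topology RealInnerProductSpace

theorem stmt13 (d : ℕ) (Ω : Set (Fin d → ℝ)) (hΩ : MeasurableSet Ω)
    (hfin : volume Ω < ⊤) (p : ℝ) (hp : 0 < p) (hp1 : p < 1)
    {V : Type*} [NormedAddCommGroup V] [InnerProductSpace ℝ V] [CompleteSpace V]
    (ι : V →L[ℝ] Lp ℝ 2 (volume.restrict Ω))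
    (α β L : ℝ) (hα : 0 < α) (hβ : 0 < β) (hL : 0 ≤ L)
    (ε₁ ε₂ : ℝ) (hε₁ : 0 < ε₁) (hε₂ : 0 < ε₂) (hεle : ε₂ ≤ ε₁)
    (F : V → ℝ) (F' : V → V →L[ℝ] ℝ) (hF : ∀ v : V, HasFDerivAt F (F' v) v)
    (u₁ u₂ : V)
    (hopt : ∀ v : V,
      α * ⟪u₂, v⟫ + L * ⟪u₂ - u₁, v⟫ + F' u₁ v
        + 2 * β * ∫ x, psiSmDeriv p ε₁ (((ι u₁) x) ^ 2) * (ι u₂) x * (ι v) x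
            ∂(volume.restrict Ω) = 0)
    (hdesc : F u₂ ≤ F u₁ + F' u₁ (u₂ - u₁) + L * ‖u₂ - u₁‖ ^ 2) :
    (F u₂ + α / 2 * ‖u₂‖ ^ 2
        + β * ∫ x, psiSm p ε₂ (((ι u₂) x) ^ 2) ∂(volume.restrict Ω))
      + α / 2 * ‖u₂ - u₁‖ ^ 2
      + β * ∫ x, psiSmDeriv p ε₁ (((ι u₁) x) ^ 2) * ((ι u₂) x - (ι u₁) x) ^ 2
          ∂(volume.restrict Ω)
    ≤ F u₁ + α / 2 * ‖u₁‖ ^ 2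
        + β * ∫ x, psiSm p ε₁ (((ι u₁) x) ^ 2) ∂(volume.restrict Ω) := by
  haveI hfinμ : IsFiniteMeasure (volume.restrict Ω) :=
    ⟨by rw [Measure.restrict_apply_univ]; exact hfin⟩
  have hfm : MemLp (fun x => (ι u₁) x) 2 (volume.restrict Ω) := Lp.memLp (ι u₁)
  have hgm : MemLp (fun x => (ι u₂) x) 2 (volume.restrict Ω) := Lp.memLp (ι u₂)
  have hff : Integrable (fun x => ((ι u₁) x) ^ 2) (volume.restrict Ω) := hfm.integrable_sq
  have hgg : Integrable (fun x => ((ι u₂) x) ^ 2) (volume.restrict Ω) := hgm.integrable_sq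
  have hdd : Integrable (fun x => ((ι u₂) x - (ι u₁) x) ^ 2) (volume.restrict Ω) := by
    simpa using (hgm.sub hfm).integrable_sq
  have hψm : AEStronglyMeasurable (fun x => psiSmDeriv p ε₁ (((ι u₁) x) ^ 2)) (volume.restrict Ω) :=
    ((measurable_psiSmDeriv p ε₁).comp_aemeasurable
      ((Lp.aestronglyMeasurable (ι u₁)).aemeasurable.pow_const 2)).aestronglyMeasurable
  have hψb : ∀ x, ‖psiSmDeriv p ε₁ (((ι u₁) x) ^ 2)‖ ≤ p / 2 * ε₁ ^ (p - 2) := fun x => by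
    rw [Real.norm_eq_abs, abs_of_nonneg (psiSmDeriv_nonneg hp hε₁ (sq_nonneg _))]
    exact psiSmDeriv_le hp hε₁ _
  have hJ1 : Integrable
      (fun x => psiSmDeriv p ε₁ (((ι u₁) x) ^ 2) * ((ι u₂) x - (ι u₁) x) ^ 2) (volume.restrict Ω) :=
    hdd.bdd_mul hψm (Filter.Eventually.of_forall hψb)
  have hJ2 : Integrable
      (fun x => psiSmDeriv p ε₁ (((ι u₁) x) ^ 2) * (((ι u₂) x) ^ 2 - ((ι u₁) x) ^ 2)) (volume.restrict Ω) :=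
    (hgg.sub hff).bdd_mul hψm (Filter.Eventually.of_forall hψb)
  have hS1 : Integrable (fun x => psiSm p ε₁ (((ι u₁) x) ^ 2)) (volume.restrict Ω) :=
    integrable_psiSm_comp hp hp1 hε₁ hfm
  have hS2 : Integrable (fun x => psiSm p ε₂ (((ι u₂) x) ^ 2)) (volume.restrict Ω) :=
    integrable_psiSm_comp hp hp1 hε₂ hgm
  -- specialize the optimality condition
  have hopt' := hopt (u₂ - u₁)
  have hve : ∀ᵐ x ∂(volume.restrict Ω), (ι (u₂ - u₁)) x = (ι u₂) x - (ι u₁) x := by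
    have h1 : ι (u₂ - u₁) = ι u₂ - ι u₁ := map_sub ι u₂ u₁
    rw [h1]
    filter_upwards [Lp.coeFn_sub (ι u₂) (ι u₁)] with x hx using hx
  have hIeq : ∫ x, psiSmDeriv p ε₁ (((ι u₁) x) ^ 2) * (ι u₂) x * (ι (u₂ - u₁)) x ∂(volume.restrict Ω)
      = ∫ x, psiSmDeriv p ε₁ (((ι u₁) x) ^ 2) * (ι u₂) x * ((ι u₂) x - (ι u₁) x) ∂(volume.restrict Ω) :=
    integral_congr_ae (by filter_upwards [hve] with x hx; rw [hx])
  rw [hIeq, real_inner_self_eq_norm_sq] at hopt'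
  -- split the integral
  have hsplit : 2 * ∫ x, psiSmDeriv p ε₁ (((ι u₁) x) ^ 2) * (ι u₂) x
        * ((ι u₂) x - (ι u₁) x) ∂(volume.restrict Ω)
      = (∫ x, psiSmDeriv p ε₁ (((ι u₁) x) ^ 2) * ((ι u₂) x - (ι u₁) x) ^ 2 ∂(volume.restrict Ω))
        + ∫ x, psiSmDeriv p ε₁ (((ι u₁) x) ^ 2) * (((ι u₂) x) ^ 2 - ((ι u₁) x) ^ 2) ∂(volume.restrict Ω) := by
    rw [← integral_const_mul, ← integral_add hJ1 hJ2]
    exact integral_congr_ae (Filter.Eventually.of_forall fun x => by ring)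
  -- monotonicity of the smoothed functional
  have hptS : ∀ x, psiSm p ε₂ (((ι u₂) x) ^ 2)
      ≤ psiSm p ε₁ (((ι u₁) x) ^ 2)
        + psiSmDeriv p ε₁ (((ι u₁) x) ^ 2) * (((ι u₂) x) ^ 2 - ((ι u₁) x) ^ 2) :=
    fun x => le_trans (psiSm_mono_eps hp hp1 hε₂ hεle (sq_nonneg _))
      (psiSm_concave hp hp1 hε₁ (sq_nonneg _) (sq_nonneg _))
  have hSmono : ∫ x, psiSm p ε₂ (((ι u₂) x) ^ 2) ∂(volume.restrict Ω)
      ≤ (∫ x, psiSm p ε₁ (((ι u₁) x) ^ 2) ∂(volume.restrict Ω))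
        + ∫ x, psiSmDeriv p ε₁ (((ι u₁) x) ^ 2) * (((ι u₂) x) ^ 2 - ((ι u₁) x) ^ 2) ∂(volume.restrict Ω) := by
    rw [← integral_add hS1 hJ2]
    exact integral_mono hS2 (hS1.add hJ2) hptS
  -- inner product identities
  have hin2 : (2:ℝ) * ⟪u₂, u₂ - u₁⟫ = ‖u₂‖ ^ 2 - ‖u₁‖ ^ 2 + ‖u₂ - u₁‖ ^ 2 := by
    have h1 : ⟪u₂, u₂ - u₁⟫ = ⟪u₂, u₂⟫ - ⟪u₂, u₁⟫ := by rw [inner_sub_right]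
    have h2 := real_inner_self_eq_norm_sq u₂
    have h3 := norm_sub_sq_real u₂ u₁
    linarith
  have h1 : α * ⟪u₂, u₂ - u₁⟫
      = α / 2 * ‖u₂‖ ^ 2 - α / 2 * ‖u₁‖ ^ 2 + α / 2 * ‖u₂ - u₁‖ ^ 2 := by
    linear_combination (α / 2) * hin2
  have h2 : 2 * β * ∫ x, psiSmDeriv p ε₁ (((ι u₁) x) ^ 2) * (ι u₂) x
        * ((ι u₂) x - (ι u₁) x) ∂(volume.restrict Ω)
      = β * (∫ x, psiSmDeriv p ε₁ (((ι u₁) x) ^ 2) * ((ι u₂) x - (ι u₁) x) ^ 2 ∂(volume.restrict Ω))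
        + β * ∫ x, psiSmDeriv p ε₁ (((ι u₁) x) ^ 2)
            * (((ι u₂) x) ^ 2 - ((ι u₁) x) ^ 2) ∂(volume.restrict Ω) := by
    linear_combination β * hsplit
  have h3 := mul_le_mul_of_nonneg_left hSmono hβ.le
  rw [mul_add] at h3
  linarith [hdesc, hopt', h1, h2, h3]
end
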